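/- arXiv:1511.01254 — 6 statements merged into one kernel-verified Lean document; each statement's English description precedes it below -/
import Mathlib

section
/- Let q be a power of an odd prime, let ψ be a nontrivial additive character of 𝔽_q, and let z ∈ sl(2,𝔽_q) be elliptic. Then the sum of ψ(trace(z·e)) over all elliptic elements e ∈ sl(2,𝔽_q) equals q. -/
open scoped Classical

open Polynomial in


open Polynomial in


open Polynomial in
private lemma charpoly_fin2 {F : Type} [Field F] (M : Matrix (Fin 2) (Fin 2) F) :
    M.charpoly = X^2 - C M.trace * X + C M.det := by
  rw [Matrix.charpoly, Matrix.det_fin_two, Matrix.charmatrix_apply_eq,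
    Matrix.charmatrix_apply_eq, Matrix.charmatrix_apply_ne _ _ _ (by decide),
    Matrix.charmatrix_apply_ne _ _ _ (by decide), Matrix.trace_fin_two, Matrix.det_fin_two,
    map_add, map_sub, map_mul, map_mul]
  ring

open Polynomial in
private lemma ell_iff {F : Type} [Field F] (M : Matrix (Fin 2) (Fin 2) F) (h : M.trace = 0) :
    Irreducible M.charpoly ↔ ∀ x : F, x^2 ≠ - M.det := by
  rw [charpoly_fin2, h, map_zero, zero_mul, sub_zero, show C M.det = - C (-M.det) by simp,
    ← sub_eq_add_neg]
  exact X_pow_sub_C_irreducible_iff_of_prime Nat.prime_two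

private lemma two_mul_ite {F : Type} [Field F] [Fintype F] [DecidableEq F] (h2 : (2:F) ≠ 0)
    (u : F) (w : ℂ) :
    (2:ℂ) * (if (∀ x : F, x^2 ≠ u) then w else 0)
      = 2*w - (∑ x : F, if x*x = u then w else 0) - (if u = 0 then w else 0) := by
  by_cases hc : ∀ x : F, x^2 ≠ u
  · rw [if_pos hc, if_neg (fun h => hc 0 (by rw [h]; ring)),
      Finset.sum_eq_zero (fun x _ => if_neg (fun h => hc x (by rw [← h]; ring)))]
    ring
  · rw [if_neg hc]
    push_neg at hc
    obtain ⟨x₀, hx₀⟩ := hc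
    by_cases hu : u = 0
    · subst hu
      rw [Finset.sum_congr rfl (fun x _ => if_congr mul_self_eq_zero rfl rfl),
        Finset.sum_ite_eq' Finset.univ (0:F) (fun _ => w), if_pos (Finset.mem_univ _), if_pos rfl]
      ring
    · have hx0ne : x₀ ≠ 0 := fun h => hu (by rw [← hx₀, h]; ring)
      have hne : x₀ ≠ -x₀ := by
        intro h
        apply hx0ne
        have h20 : (2:F) * x₀ = 0 := by linear_combination h
        rcases mul_eq_zero.mp h20 with h' | h'
        · exact absurd h' h2
        · exact h'
      have hsum : (∑ x : F, if x*x = u then w else 0) = 2 * w := by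
        have hsol : ∀ x : F, (x*x = u) ↔ (x ∈ ({x₀, -x₀} : Finset F)) := by
          intro x
          rw [← hx₀, sq, mul_self_eq_mul_self_iff]
          simp
        calc (∑ x : F, if x*x = u then w else 0)
            = ∑ x : F, (if x ∈ ({x₀, -x₀} : Finset F) then w else 0) :=
              Finset.sum_congr rfl fun x _ => if_congr (hsol x) rfl rfl
          _ = ∑ _x ∈ Finset.univ ∩ ({x₀, -x₀} : Finset F), w := (Finset.sum_ite_mem _ _ _)
          _ = ∑ _x ∈ ({x₀, -x₀} : Finset F), w := by rw [Finset.univ_inter]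
          _ = 2 * w := by
              rw [Finset.sum_const, Finset.card_insert_of_notMem (by simpa using hne),
                Finset.card_singleton]
              push_cast [two_smul]
              ring
      rw [hsum, if_neg hu]
      ring


private def quadEquiv (F : Type) [Field F] : (F × F × F × F) ≃ Matrix (Fin 2) (Fin 2) F :=
  { toFun := fun t => !![t.1, t.2.1; t.2.2.1, t.2.2.2]
    invFun := fun M => (M 0 0, M 0 1, M 1 0, M 1 1)
    left_inv := by rintro ⟨a, b, c, d⟩; simp
    right_inv := fun M => (Matrix.eta_fin_two M).symm }


private def halfEquiv (F : Type) [Field F] (h2 : (2:F) ≠ 0) : (F × F) ≃ (F × F) :=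
  { toFun := fun t => ((t.2 - t.1)/2, (t.2 + t.1)/2)
    invFun := fun t => (t.2 - t.1, t.2 + t.1)
    left_inv := by
      rintro ⟨y, w⟩
      have h2' : (2:F) ≠ 0 := h2
      rw [Prod.mk.injEq]
      constructor <;> (field_simp; try ring)
    right_inv := by
      rintro ⟨a, x⟩
      have h2' : (2:F) ≠ 0 := h2
      rw [Prod.mk.injEq]
      constructor <;> (field_simp; try ring) }


private lemma core (q : ℕ)
    (F : Type) [Field F] [Fintype F] [DecidableEq F] (hcard : Fintype.card F = q)
    (ψ : AddChar F ℂ) (p r s : F) (h2 : (2:F) ≠ 0)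
    (hD : ∀ x : F, x^2 ≠ p^2 + r*s)
    (hrne : r ≠ 0) (hsne : s ≠ 0) (hDne : p^2 + r*s ≠ 0)
    (hX : ∀ t : F, ∑ x : F, ψ (t * x) = if t = 0 then (q:ℂ) else 0)
    (hX0 : ∀ t : F, t ≠ 0 → ∑ x : F, ψ (t * x) = 0)
    (hXne : ∀ t : F, t ≠ 0 → ∑ x ∈ Finset.univ \ {(0:F)}, ψ (t * x) = -1) :
    ∑ a : F, ∑ b : F, ∑ c : F,
      (if (∀ x : F, x^2 ≠ a^2 + b*c) then ψ (2*p*a + s*b + r*c) else 0) = q := by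
  -- T1 : full sum of the character vanishes
  have hT1 : ∑ a : F, ∑ b : F, ∑ c : F, (2:ℂ) * ψ (2*p*a + s*b + r*c) = 0 := by
    refine Finset.sum_eq_zero fun a _ => Finset.sum_eq_zero fun b _ => ?_
    calc ∑ c : F, (2:ℂ) * ψ (2*p*a + s*b + r*c)
        = ∑ c : F, (2 * ψ (2*p*a + s*b)) * ψ (r*c) := by
          refine Finset.sum_congr rfl fun c _ => ?_
          rw [AddChar.map_add_eq_mul]
          ring
      _ = (2 * ψ (2*p*a + s*b)) * ∑ c : F, ψ (r*c) := by rw [← Finset.mul_sum]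
      _ = 0 := by rw [hX0 r hrne, mul_zero]
  -- T3 : the nilpotent-cone sum
  have hT3 : ∑ a : F, ∑ b : F, ∑ c : F,
      (if a^2 + b*c = 0 then ψ (2*p*a + s*b + r*c) else 0) = -q := by
    rw [Finset.sum_comm]
    rw [Finset.sum_eq_sum_sdiff_singleton_add (Finset.mem_univ (0:F))]
    have hb0 : ∑ a : F, ∑ c : F,
        (if a^2 + 0*c = 0 then ψ (2*p*a + s*0 + r*c) else 0) = 0 := by
      refine Finset.sum_eq_zero fun a _ => ?_
      by_cases ha : a^2 = 0
      · calc ∑ c : F, (if a^2 + 0*c = 0 then ψ (2*p*a + s*0 + r*c) else 0)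
            = ∑ c : F, ψ (2*p*a + s*0) * ψ (r*c) := by
              refine Finset.sum_congr rfl fun c _ => ?_
              rw [if_pos (by rw [ha]; ring), AddChar.map_add_eq_mul]
          _ = 0 := by rw [← Finset.mul_sum, hX0 r hrne, mul_zero]
      · refine Finset.sum_eq_zero fun c _ => if_neg ?_
        intro h
        exact ha (by linear_combination h)
    rw [hb0, add_zero]
    have hbne : ∀ b ∈ Finset.univ \ {(0:F)}, ∑ a : F, ∑ c : F,
        (if a^2 + b*c = 0 then ψ (2*p*a + s*b + r*c) else 0)
        = ∑ u : F, ψ ((s + 2*p*u - r*u^2) * b) := by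
      intro b hb
      have hb' : b ≠ 0 := by simpa using (Finset.mem_sdiff.mp hb).2
      have step1 : ∀ a : F, ∑ c : F, (if a^2 + b*c = 0 then ψ (2*p*a + s*b + r*c) else 0)
          = ψ (2*p*a + s*b + r*(-(a^2)/b)) := by
        intro a
        have hcond : ∀ c : F, (a^2 + b*c = 0) ↔ (c = -(a^2)/b) := by
          intro c
          rw [eq_div_iff hb']
          constructor <;> intro h <;> linear_combination h
        calc ∑ c : F, (if a^2 + b*c = 0 then ψ (2*p*a + s*b + r*c) else 0)
            = ∑ c : F, (if c = -(a^2)/b then ψ (2*p*a + s*b + r*c) else 0) :=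
              Finset.sum_congr rfl fun c _ => if_congr (hcond c) rfl rfl
          _ = ψ (2*p*a + s*b + r*(-(a^2)/b)) := by
              rw [Finset.sum_ite_eq' Finset.univ (-(a^2)/b) (fun c => ψ (2*p*a + s*b + r*c)),
                if_pos (Finset.mem_univ _)]
      rw [Finset.sum_congr rfl fun a _ => step1 a]
      refine (Fintype.sum_equiv (Equiv.mulRight₀ b hb') _ _ fun u => ?_).symm
      show ψ ((s + 2*p*u - r*u^2) * b) = ψ (2*p*(u*b) + s*b + r*(-((u*b)^2)/b))
      congr 1
      field_simp
      ring
    rw [Finset.sum_congr rfl hbne, Finset.sum_comm]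
    have : ∀ u : F, ∑ b ∈ Finset.univ \ {(0:F)}, ψ ((s + 2*p*u - r*u^2) * b) = -1 := by
      intro u
      refine hXne _ fun h => hD (r*u - p) ?_
      linear_combination (-r) * h
    rw [Finset.sum_congr rfl fun u _ => this u, Finset.sum_const, Finset.card_univ, hcard]
    simp
  -- T2 : the sum over the "square" locus
  have hT2 : ∑ a : F, ∑ b : F, ∑ c : F,
      (∑ x : F, if x*x = a^2 + b*c then ψ (2*p*a + s*b + r*c) else 0) = -q := by
    have e1 : ∑ a : F, ∑ b : F, ∑ c : F,
        (∑ x : F, if x*x = a^2 + b*c then ψ (2*p*a + s*b + r*c) else 0)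
        = ∑ a : F, ∑ x : F, ∑ b : F, ∑ c : F,
            (if x*x = a^2 + b*c then ψ (2*p*a + s*b + r*c) else 0) := by
      refine Finset.sum_congr rfl fun a _ => ?_
      calc ∑ b : F, ∑ c : F, ∑ x : F, (if x*x = a^2 + b*c then ψ (2*p*a + s*b + r*c) else 0)
          = ∑ b : F, ∑ x : F, ∑ c : F, (if x*x = a^2 + b*c then ψ (2*p*a + s*b + r*c) else 0) :=
            Finset.sum_congr rfl fun b _ => Finset.sum_comm
        _ = ∑ x : F, ∑ b : F, ∑ c : F, (if x*x = a^2 + b*c then ψ (2*p*a + s*b + r*c) else 0) :=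
            Finset.sum_comm
    rw [e1]
    have e2 : ∑ a : F, ∑ x : F, ∑ b : F, ∑ c : F,
        (if x*x = a^2 + b*c then ψ (2*p*a + s*b + r*c) else 0)
        = ∑ y : F, ∑ w : F, ∑ b : F, ∑ c : F,
            (if b*c = y*w then ψ (p*(w-y) + s*b + r*c) else 0) := by
      calc ∑ a : F, ∑ x : F, ∑ b : F, ∑ c : F,
          (if x*x = a^2 + b*c then ψ (2*p*a + s*b + r*c) else 0)
          = ∑ t : F × F, ∑ b : F, ∑ c : F,
            (if t.2*t.2 = t.1^2 + b*c then ψ (2*p*t.1 + s*b + r*c) else 0) :=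
            (Fintype.sum_prod_type' _).symm
        _ = ∑ t : F × F, ∑ b : F, ∑ c : F,
            (if ((halfEquiv F h2) t).2*((halfEquiv F h2) t).2 = ((halfEquiv F h2) t).1^2 + b*c
              then ψ (2*p*((halfEquiv F h2) t).1 + s*b + r*c) else 0) :=
            (Equiv.sum_comp (halfEquiv F h2) (fun t => ∑ b : F, ∑ c : F,
              (if t.2*t.2 = t.1^2 + b*c then ψ (2*p*t.1 + s*b + r*c) else 0))).symm
        _ = ∑ y : F, ∑ w : F, ∑ b : F, ∑ c : F,
            (if ((w+y)/2)*((w+y)/2) = ((w-y)/2)^2 + b*c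
              then ψ (2*p*((w-y)/2) + s*b + r*c) else 0) := Fintype.sum_prod_type _
        _ = _ := ?_
      refine Finset.sum_congr rfl fun y _ => Finset.sum_congr rfl fun w _ =>
        Finset.sum_congr rfl fun b _ => Finset.sum_congr rfl fun c _ => ?_
      show (if ((w+y)/2)*((w+y)/2) = ((w-y)/2)^2 + b*c then ψ (2*p*((w-y)/2) + s*b + r*c) else 0)
        = (if b*c = y*w then ψ (p*(w-y) + s*b + r*c) else 0)
      refine if_congr ?_ (by congr 1; field_simp) rfl
      have key : ((w+y)/2)*((w+y)/2) - (((w-y)/2)^2 + b*c) = y*w - b*c := by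
        field_simp
        ring
      rw [← sub_eq_zero, key, sub_eq_zero, eq_comm]
    rw [e2]
    have e3 : ∑ y : F, ∑ w : F, ∑ b : F, ∑ c : F,
        (if b*c = y*w then ψ (p*(w-y) + s*b + r*c) else 0)
        = ∑ b : F, ∑ y : F, ∑ w : F, ∑ c : F,
            (if b*c = y*w then ψ (p*(w-y) + s*b + r*c) else 0) := by
      calc ∑ y : F, ∑ w : F, ∑ b : F, ∑ c : F,
          (if b*c = y*w then ψ (p*(w-y) + s*b + r*c) else 0)
          = ∑ y : F, ∑ b : F, ∑ w : F, ∑ c : F,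
            (if b*c = y*w then ψ (p*(w-y) + s*b + r*c) else 0) :=
            Finset.sum_congr rfl fun y _ => Finset.sum_comm
        _ = _ := Finset.sum_comm
    rw [e3]
    rw [Finset.sum_eq_sum_sdiff_singleton_add (Finset.mem_univ (0:F))]
    have hb0 : ∑ y : F, ∑ w : F, ∑ c : F,
        (if (0:F)*c = y*w then ψ (p*(w-y) + s*0 + r*c) else 0) = 0 := by
      refine Finset.sum_eq_zero fun y _ => Finset.sum_eq_zero fun w _ => ?_
      by_cases hyw : y*w = 0
      · calc ∑ c : F, (if (0:F)*c = y*w then ψ (p*(w-y) + s*0 + r*c) else 0)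
            = ∑ c : F, ψ (p*(w-y) + s*0) * ψ (r*c) := by
              refine Finset.sum_congr rfl fun c _ => ?_
              rw [if_pos (by rw [zero_mul, hyw]), AddChar.map_add_eq_mul]
          _ = 0 := by rw [← Finset.mul_sum, hX0 r hrne, mul_zero]
      · refine Finset.sum_eq_zero fun c _ => if_neg fun h => hyw (by linear_combination -h)
    rw [hb0, add_zero]
    have hbne : ∀ b ∈ Finset.univ \ {(0:F)},
        (∑ y : F, ∑ w : F, ∑ c : F, (if b*c = y*w then ψ (p*(w-y) + s*b + r*c) else 0))
        = ψ (((p^2 + r*s)/r) * b) * q := by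
      intro b hb
      have hb' : b ≠ 0 := by simpa using (Finset.mem_sdiff.mp hb).2
      have stepc : ∀ y w : F, ∑ c : F, (if b*c = y*w then ψ (p*(w-y) + s*b + r*c) else 0)
          = ψ (p*(w-y) + s*b + r*(y*w/b)) := by
        intro y w
        have hcond : ∀ c : F, (b*c = y*w) ↔ (c = y*w/b) := by
          intro c
          rw [eq_div_iff hb']
          constructor <;> intro h <;> linear_combination h
        calc ∑ c : F, (if b*c = y*w then ψ (p*(w-y) + s*b + r*c) else 0)
            = ∑ c : F, (if c = y*w/b then ψ (p*(w-y) + s*b + r*c) else 0) :=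
              Finset.sum_congr rfl fun c _ => if_congr (hcond c) rfl rfl
          _ = _ := by
              rw [Finset.sum_ite_eq' Finset.univ (y*w/b) (fun c => ψ (p*(w-y) + s*b + r*c)),
                if_pos (Finset.mem_univ _)]
      have stepw : ∀ y : F, ∑ w : F, ψ (p*(w-y) + s*b + r*(y*w/b))
          = ψ (s*b - p*y) * (if p + r*y/b = 0 then (q:ℂ) else 0) := by
        intro y
        calc ∑ w : F, ψ (p*(w-y) + s*b + r*(y*w/b))
            = ∑ w : F, ψ (s*b - p*y) * ψ ((p + r*y/b) * w) := by
              refine Finset.sum_congr rfl fun w _ => ?_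
              rw [← AddChar.map_add_eq_mul]
              congr 1
              field_simp
              ring
          _ = ψ (s*b - p*y) * ∑ w : F, ψ ((p + r*y/b) * w) := by rw [← Finset.mul_sum]
          _ = _ := by rw [hX]
      have stepy : ∑ y : F, ψ (s*b - p*y) * (if p + r*y/b = 0 then (q:ℂ) else 0)
          = ψ (((p^2 + r*s)/r) * b) * q := by
        have hcond : ∀ y : F, (p + r*y/b = 0) ↔ (y = -(p*b)/r) := by
          intro y
          rw [eq_div_iff hrne]
          constructor <;> intro h
          · field_simp at h
            linear_combination h
          · field_simp
            linear_combination h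
        calc ∑ y : F, ψ (s*b - p*y) * (if p + r*y/b = 0 then (q:ℂ) else 0)
            = ∑ y : F, (if y = -(p*b)/r then ψ (s*b - p*y) * q else 0) := by
              refine Finset.sum_congr rfl fun y _ => ?_
              rw [mul_ite, mul_zero, if_congr (hcond y) rfl rfl]
          _ = ψ (s*b - p*(-(p*b)/r)) * q := by
              rw [Finset.sum_ite_eq' Finset.univ (-(p*b)/r) (fun y => ψ (s*b - p*y) * q),
                if_pos (Finset.mem_univ _)]
          _ = ψ (((p^2 + r*s)/r) * b) * q := by
              congr 2
              field_simp
              ring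
      calc (∑ y : F, ∑ w : F, ∑ c : F, (if b*c = y*w then ψ (p*(w-y) + s*b + r*c) else 0))
          = ∑ y : F, ∑ w : F, ψ (p*(w-y) + s*b + r*(y*w/b)) :=
            Finset.sum_congr rfl fun y _ => Finset.sum_congr rfl fun w _ => stepc y w
        _ = ∑ y : F, ψ (s*b - p*y) * (if p + r*y/b = 0 then (q:ℂ) else 0) :=
            Finset.sum_congr rfl fun y _ => stepw y
        _ = ψ (((p^2 + r*s)/r) * b) * q := stepy
    rw [Finset.sum_congr rfl hbne, ← Finset.sum_mul,
      hXne ((p^2 + r*s)/r) (div_ne_zero hDne hrne)]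
    ring
  -- assembly
  apply mul_left_cancel₀ (two_ne_zero (α := ℂ))
  have expand : (2:ℂ) * (∑ a : F, ∑ b : F, ∑ c : F,
      (if (∀ x : F, x^2 ≠ a^2 + b*c) then ψ (2*p*a + s*b + r*c) else 0))
      = ∑ a : F, ∑ b : F, ∑ c : F, ((2:ℂ) * ψ (2*p*a + s*b + r*c)
        - (∑ x : F, if x*x = a^2 + b*c then ψ (2*p*a + s*b + r*c) else 0)
        - (if a^2 + b*c = 0 then ψ (2*p*a + s*b + r*c) else 0)) := by
    rw [Finset.mul_sum]
    refine Finset.sum_congr rfl fun a _ => ?_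
    rw [Finset.mul_sum]
    refine Finset.sum_congr rfl fun b _ => ?_
    rw [Finset.mul_sum]
    exact Finset.sum_congr rfl fun c _ => two_mul_ite h2 _ _
  rw [expand]
  simp only [Finset.sum_sub_distrib]
  rw [hT1, hT2, hT3]
  ring


/-- For `q` a power of an odd prime, `ψ` a nontrivial additive character of `𝔽_q`,
and `z ∈ sl(2,𝔽_q)` elliptic (trace zero with irreducible characteristic polynomial),
the sum of `ψ(trace (z * e))` over all elliptic `e ∈ sl(2,𝔽_q)` equals `q`. -/
theorem sum_additive_character_over_elliptic
    (q : ℕ) (hq : Odd q)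
    (F : Type) [Field F] [Fintype F] [DecidableEq F] (hcard : Fintype.card F = q)
    (ψ : AddChar F ℂ) (hψ : ψ ≠ 1)
    (z : Matrix (Fin 2) (Fin 2) F) (hz : z.trace = 0) (hzell : Irreducible z.charpoly) :
    ∑ e : Matrix (Fin 2) (Fin 2) F,
      (if e.trace = 0 ∧ Irreducible e.charpoly then ψ (z * e).trace else 0) = q := by
  set p := z 0 0 with hp
  set r := z 0 1 with hrdef
  set s := z 1 0 with hsdef
  have hz11 : z 1 1 = -p := by
    rw [Matrix.trace_fin_two] at hz
    linear_combination hz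
  -- characteristic 2 excluded
  have h2 : (2:F) ≠ 0 := by
    intro h20
    have hdvd : ringChar F ∣ 2 := by
      have := (CharP.cast_eq_zero_iff F (ringChar F) 2).mp (by exact_mod_cast h20)
      exact this
    have hchar2 : ringChar F = 2 := by
      rcases (Nat.dvd_prime Nat.prime_two).mp hdvd with h | h
      · exact absurd h (CharP.ringChar_ne_one (R := F))
      · exact h
    have := FiniteField.even_card_of_char_two hchar2
    rw [hcard] at this
    have := Nat.odd_iff.mp hq
    omega
  have hell := (ell_iff z hz).mp hzell
  have hD : ∀ x : F, x^2 ≠ p^2 + r*s := by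
    intro x hx
    apply hell x
    rw [Matrix.det_fin_two, hz11]
    linear_combination hx
  have hrne : r ≠ 0 := fun h => hD p (by rw [h]; ring)
  have hsne : s ≠ 0 := fun h => hD p (by rw [h]; ring)
  have hDne : p^2 + r*s ≠ 0 := fun h => hD 0 (by rw [h]; ring)
  have hprim : ψ.IsPrimitive := AddChar.IsPrimitive.of_ne_one hψ
  have hX : ∀ t : F, ∑ x : F, ψ (t * x) = if t = 0 then (q:ℂ) else 0 := by
    intro t
    have h := AddChar.sum_mulShift t hprim
    rw [hcard] at h
    simp only [Nat.cast_ite, Nat.cast_zero] at h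
    rw [← h]
    exact Fintype.sum_congr _ _ fun x => by rw [mul_comm]
  have hX0 : ∀ t : F, t ≠ 0 → ∑ x : F, ψ (t * x) = 0 := fun t ht => by rw [hX t, if_neg ht]
  have hXne : ∀ t : F, t ≠ 0 → ∑ x ∈ Finset.univ \ {(0:F)}, ψ (t * x) = -1 := by
    intro t ht
    have h0 := hX0 t ht
    rw [Finset.sum_eq_sum_sdiff_singleton_add (Finset.mem_univ (0:F))] at h0
    simp only [mul_zero, AddChar.map_zero_eq_one] at h0
    linear_combination h0
  -- reduce the matrix sum to a triple sum
  have hred : ∑ e : Matrix (Fin 2) (Fin 2) F,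
      (if e.trace = 0 ∧ Irreducible e.charpoly then ψ (z * e).trace else 0)
      = ∑ a : F, ∑ b : F, ∑ c : F,
          (if (∀ x : F, x^2 ≠ a^2 + b*c) then ψ (2*p*a + s*b + r*c) else 0) := by
    rw [← Equiv.sum_comp (quadEquiv F) (fun e => if e.trace = 0 ∧ Irreducible e.charpoly
        then ψ (z * e).trace else 0)]
    rw [Fintype.sum_prod_type]
    refine Finset.sum_congr rfl fun a _ => ?_
    rw [Fintype.sum_prod_type]
    refine Finset.sum_congr rfl fun b _ => ?_
    rw [Fintype.sum_prod_type]
    refine Finset.sum_congr rfl fun c _ => ?_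
    show ∑ d : F, (if (!![a,b;c,d]).trace = 0 ∧ Irreducible (!![a,b;c,d]).charpoly
        then ψ (z * !![a,b;c,d]).trace else 0) = _
    rw [Finset.sum_eq_single (-a)]
    · have htr : (!![a,b;c,-a]).trace = 0 := by
        rw [Matrix.trace_fin_two]
        simp
      have hIrr : Irreducible (!![a,b;c,-a]).charpoly ↔ ∀ x : F, x^2 ≠ a^2 + b*c := by
        rw [ell_iff _ htr, Matrix.det_fin_two_of,
          show -(a * -a - b * c) = a^2 + b*c by ring]
      have htrz : (z * !![a,b;c,-a]).trace = 2*(z 0 0)*a + (z 1 0)*b + (z 0 1)*c := by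
        rw [Matrix.trace_fin_two, Matrix.mul_apply, Matrix.mul_apply, Fin.sum_univ_two,
          Fin.sum_univ_two, hz11]
        simp
        ring
      rw [htrz, hIrr]
      simp [htr]; rfl
    · intro d _ hd
      rw [if_neg]
      rintro ⟨h1, -⟩
      apply hd
      rw [Matrix.trace_fin_two] at h1
      simp at h1
      linear_combination h1
    · intro h
      exact absurd (Finset.mem_univ _) h
  rw [hred]
  exact core q F hcard ψ p r s h2 hD hrne hsne hDne hX hX0 hXne
end

section
/- Let q be a power of an odd prime. For a ∈ 𝔽_q^× and b ∈ 𝔽_q write g_{a,b} for the matrix [[a, b], [0, 1]] ∈ GL(2,𝔽_q), and for u ∈ 𝔽_q^× write Z_u for the matrix [[0, 1], [u, 0]] ∈ sl(2,𝔽_q). Then the map (u, a, b) ↦ g_{a,b} · Z_u · g_{a,b}^{-1}, defined on triples with u a non-square in 𝔽_q^×, a ∈ 𝔽_q^×, and b ∈ 𝔽_q, is a bijection onto the set of elliptic elements of sl(2,𝔽_q). -/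
open Polynomial Matrix

section Aux

variable {F : Type} [Field F] [Fintype F] [DecidableEq F]

lemma aux_charpoly_fin_two (M : Matrix (Fin 2) (Fin 2) F) :
    M.charpoly = X ^ 2 - C M.trace * X + C M.det := by
  rw [Matrix.charpoly, Matrix.det_fin_two, Matrix.trace_fin_two, Matrix.det_fin_two]
  simp [charmatrix_apply_eq, charmatrix_apply_ne]
  ring

lemma aux_key (u : F) (a : Fˣ) (b : F) :
    (!![(a:F), b; 0, 1]) * !![0, 1; u, 0] * (!![(a:F), b; 0, 1])⁻¹ =
      !![b * u * (a:F)⁻¹, (a:F) - b ^ 2 * u * (a:F)⁻¹;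
         u * (a:F)⁻¹, -(b * u * (a:F)⁻¹)] := by
  have ha : (a : F) ≠ 0 := a.ne_zero
  have hdet : IsUnit (!![(a:F), b; 0, 1]).det := by
    simp [Matrix.det_fin_two_of]
  have := (!![(a:F), b; 0, 1]).invertibleOfIsUnitDet hdet
  rw [Matrix.mul_inv_eq_iff_eq_mul_of_invertible, Matrix.mul_fin_two, Matrix.mul_fin_two]
  ext i j
  fin_cases i <;> fin_cases j <;> simp <;> field_simp <;> ring

lemma aux_not_square_iff (u : Fˣ) :
    ¬ IsSquare u ↔ ∀ r : F, r ^ 2 ≠ (u : F) := by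
  constructor
  · intro h r hr
    have hr0 : r ≠ 0 := by
      rintro rfl; exact u.ne_zero (by simpa using hr.symm)
    exact h ⟨Units.mk0 r hr0, Units.ext (by simp [← hr, sq])⟩
  · rintro h ⟨s, rfl⟩
    exact h s (by push_cast; ring)

end Aux

/-- For `q` a power of an odd prime, the map
`(u, a, b) ↦ g_{a,b} · Z_u · g_{a,b}⁻¹`, where `g_{a,b} = !![a, b; 0, 1]` and
`Z_u = !![0, 1; u, 0]`, restricted to triples with `u` a non-square unit,
`a` a unit and `b` arbitrary, is a bijection onto the set of elliptic elements
of `sl(2,𝔽_q)` (trace-zero matrices with irreducible characteristic polynomial). -/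
theorem elliptic_parametrization_bijOn
    (q : ℕ) (hq : Odd q)
    (F : Type) [Field F] [Fintype F] [DecidableEq F] (hcard : Fintype.card F = q) :
    Set.BijOn
      (fun t : Fˣ × Fˣ × F =>
        (!![((t.2.1 : F)), t.2.2; 0, 1] : Matrix (Fin 2) (Fin 2) F) *
          (!![0, 1; ((t.1 : F)), 0] : Matrix (Fin 2) (Fin 2) F) *
          (!![((t.2.1 : F)), t.2.2; 0, 1] : Matrix (Fin 2) (Fin 2) F)⁻¹)
      {t : Fˣ × Fˣ × F | ¬ IsSquare t.1}
      {X : Matrix (Fin 2) (Fin 2) F | X.trace = 0 ∧ Irreducible X.charpoly} := by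
  have trM : ∀ (u : F) (a : Fˣ) (b : F),
      (!![b * u * (a:F)⁻¹, (a:F) - b ^ 2 * u * (a:F)⁻¹;
         u * (a:F)⁻¹, -(b * u * (a:F)⁻¹)] : Matrix (Fin 2) (Fin 2) F).trace = 0 := by
    intro u a b; simp [Matrix.trace_fin_two]
  have detM : ∀ (u : F) (a : Fˣ) (b : F),
      (!![b * u * (a:F)⁻¹, (a:F) - b ^ 2 * u * (a:F)⁻¹;
         u * (a:F)⁻¹, -(b * u * (a:F)⁻¹)] : Matrix (Fin 2) (Fin 2) F).det = -u := by
    intro u a b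
    have ha : (a : F) ≠ 0 := a.ne_zero
    rw [Matrix.det_fin_two_of]
    field_simp
    ring
  constructor
  · -- MapsTo
    rintro ⟨u, a, b⟩ hu
    simp only [Set.mem_setOf_eq] at hu ⊢
    rw [aux_key]
    refine ⟨trM u a b, ?_⟩
    rw [aux_charpoly_fin_two, trM, detM]
    simpa [sub_eq_add_neg] using
      (X_pow_sub_C_irreducible_iff_of_prime (K := F) Nat.prime_two).2
        ((aux_not_square_iff u).1 hu)
  constructor
  · -- InjOn
    rintro ⟨u, a, b⟩ _ ⟨u', a', b'⟩ _ h
    simp only at h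
    rw [aux_key, aux_key] at h
    have huu : (u : F) = (u' : F) := by
      have := congrArg Matrix.det h
      rw [detM, detM] at this
      exact neg_injective this
    have h10 := congrFun (congrFun h 1) 0
    have h00 := congrFun (congrFun h 0) 0
    simp only [Matrix.of_apply, Matrix.cons_val', Matrix.cons_val_zero, Matrix.cons_val_one, Matrix.head_cons,
      Matrix.empty_val', Matrix.cons_val_fin_one, Matrix.head_fin_const] at h10 h00
    have ha : (a : F) ≠ 0 := a.ne_zero
    have ha' : (a' : F) ≠ 0 := a'.ne_zero
    have hu0 : (u : F) ≠ 0 := u.ne_zero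
    rw [← huu] at h10 h00
    have haa : (a : F) = (a' : F) := inv_injective (mul_left_cancel₀ hu0 h10)
    rw [← haa] at h00
    have hbb : b = b' :=
      mul_right_cancel₀ hu0 (mul_right_cancel₀ (inv_ne_zero ha) h00)
    exact Prod.ext (Units.ext huu) (Prod.ext (Units.ext haa) hbb)
  · -- SurjOn
    rintro X ⟨htr, hirr⟩
    set x := X 0 0 with hx
    set y := X 0 1 with hy
    set z := X 1 0 with hz
    have htr2 : x + X 1 1 = 0 := by rw [← Matrix.trace_fin_two]; exact htr
    have hw : X 1 1 = -x := by linear_combination htr2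
    set u : F := x ^ 2 + y * z with hu
    have hdetX : X.det = -u := by rw [Matrix.det_fin_two, hw, hu]; ring
    have hchar : X.charpoly = Polynomial.X ^ 2 - C u := by
      rw [aux_charpoly_fin_two, htr, hdetX]
      simp only [map_zero, map_neg, zero_mul, sub_zero]
      ring
    rw [hchar] at hirr
    have hns : ∀ r : F, r ^ 2 ≠ u :=
      (X_pow_sub_C_irreducible_iff_of_prime Nat.prime_two).1 hirr
    have hu0 : u ≠ 0 := fun h => hns 0 (by simp [h])
    have hz0 : z ≠ 0 := by
      intro h
      exact hns x (by rw [hu, h]; ring)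
    refine ⟨(Units.mk0 u hu0, Units.mk0 (u / z) (div_ne_zero hu0 hz0), x / z), ?_, ?_⟩
    · rw [Set.mem_setOf_eq, aux_not_square_iff]
      simpa using hns
    · show _ * _ * _ = X
      rw [aux_key]
      simp only [Units.val_mk0]
      rw [Matrix.eta_fin_two X, ← hx, ← hy, ← hz, hw, hu]
      have hu0' : x ^ 2 + y * z ≠ 0 := hu0
      have hu0'' : x ^ 2 + z * y ≠ 0 := by rwa [mul_comm z y]
      ext i j
      fin_cases i <;> fin_cases j <;>
        simp only [Matrix.cons_val', Matrix.cons_val_zero, Matrix.cons_val_one,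
          Matrix.head_cons, Matrix.empty_val', Matrix.cons_val_fin_one, Matrix.head_fin_const,
          Fin.isValue, Matrix.of_apply, Fin.zero_eta, Fin.mk_one] <;>
        field_simp <;> ring
end

section
/- Let q be a power of an odd prime. Under the adjoint (conjugation) action of SL(2,𝔽_q) on sl(2,𝔽_q), the set of elliptic elements decomposes into exactly (q−1)/2 orbits, and each of these orbits contains exactly (q−1)·q elements. -/
set_option linter.unusedSectionVars false
set_option maxHeartbeats 1000000

open Matrix Polynomial

namespace EllipticAux

variable {F : Type} [Field F] [Fintype F] [DecidableEq F]

local notation "M2" => Matrix (Fin 2) (Fin 2) F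
local notation "SL2" => Matrix.SpecialLinearGroup (Fin 2) F

instance : SMul (Matrix.SpecialLinearGroup (Fin 2) F) (Matrix (Fin 2) (Fin 2) F) :=
  ⟨fun g X => (g : M2) * X * ((g⁻¹ : SL2) : M2)⟩

lemma smul_def (g : SL2) (X : M2) :
    g • X = (g : M2) * X * ((g⁻¹ : SL2) : M2) := rfl

instance : MulAction (Matrix.SpecialLinearGroup (Fin 2) F) (Matrix (Fin 2) (Fin 2) F) where
  one_smul X := by
    rw [smul_def, inv_one, Matrix.SpecialLinearGroup.coe_one, mul_one, one_mul]
  mul_smul g h X := by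
    rw [smul_def, smul_def, smul_def, _root_.mul_inv_rev,
      Matrix.SpecialLinearGroup.coe_mul, Matrix.SpecialLinearGroup.coe_mul]
    noncomm_ring

lemma mem_stab_iff (g : SL2) (X : M2) :
    g ∈ MulAction.stabilizer (Matrix.SpecialLinearGroup (Fin 2) F) X ↔
      (g : M2) * X = X * (g : M2) := by
  rw [MulAction.mem_stabilizer_iff, smul_def]
  constructor
  · intro h
    have := congrArg (fun Y => Y * (g : M2)) h
    simpa only [mul_assoc, ← Matrix.SpecialLinearGroup.coe_mul, inv_mul_cancel,
      Matrix.SpecialLinearGroup.coe_one, mul_one] using this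
  · intro h
    rw [h, mul_assoc, ← Matrix.SpecialLinearGroup.coe_mul, mul_inv_cancel,
      Matrix.SpecialLinearGroup.coe_one, mul_one]

end EllipticAux

namespace EllipticAux

variable {F : Type} [Field F] [Fintype F] [DecidableEq F]

local notation "M2" => Matrix (Fin 2) (Fin 2) F
local notation "SL2" => Matrix.SpecialLinearGroup (Fin 2) F

def eSL : Matrix.SpecialLinearGroup (Fin 2) F ≃ {p : F × F // p ≠ 0} × F where
  toFun g := (⟨(g.1 0 0, g.1 0 1), by
      intro h
      have hd := g.2
      rw [Matrix.det_fin_two] at hd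
      have h1 : g.1 0 0 = 0 := congrArg Prod.fst h
      have h2 : g.1 0 1 = 0 := congrArg Prod.snd h
      rw [h1, h2] at hd; simp at hd⟩,
    if g.1 0 0 = 0 then g.1 1 1 else g.1 1 0)
  invFun x :=
    if ha : x.1.1.1 = 0 then
      ⟨!![x.1.1.1, x.1.1.2; -x.1.1.2⁻¹, x.2], by
        have hb : x.1.1.2 ≠ 0 := by
          intro hb; exact x.1.2 (Prod.ext ha hb)
        rw [Matrix.det_fin_two_of, ha]; field_simp; ring⟩
    else
      ⟨!![x.1.1.1, x.1.1.2; x.2, (1 + x.1.1.2 * x.2) / x.1.1.1], by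
        rw [Matrix.det_fin_two_of]; field_simp; ring⟩
  left_inv g := by
    have hd := g.2
    rw [Matrix.det_fin_two] at hd
    by_cases ha : g.1 0 0 = 0
    · simp only [ha, if_true, dif_pos]
      ext i j
      rw [ha] at hd
      have hb : g.1 0 1 ≠ 0 := by intro hb; rw [hb] at hd; simp at hd
      have hmul : g.1 0 1 * g.1 1 0 = -1 := by linear_combination -hd
      fin_cases i <;> fin_cases j <;> simp [ha]
      field_simp
      linear_combination -hmul
    · simp only [ha, if_false, dif_neg]
      ext i j
      fin_cases i <;> fin_cases j <;> simp [ha]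
      field_simp
      linear_combination -hd
  right_inv x := by
    obtain ⟨⟨⟨a, b⟩, hab⟩, t⟩ := x
    by_cases ha : a = 0
    · simp only [dif_pos ha]
      refine Prod.ext (Subtype.ext ?_) ?_ <;> simp [ha]
    · simp only [dif_neg ha]
      refine Prod.ext (Subtype.ext ?_) ?_ <;> simp [ha]

def eConic (s : F) (hs : ¬IsSquare s) (h2 : (2 : F) ≠ 0) :
    Option F ≃ {p : F × F // p.1 ^ 2 - s * p.2 ^ 2 = 1} where
  toFun o := o.elim ⟨(-1, 0), by ring⟩ fun t =>
    ⟨((1 + s * t ^ 2) / (1 - s * t ^ 2), 2 * t / (1 - s * t ^ 2)), by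
      have key : (1 - s * t ^ 2) ≠ 0 := by
        intro h0
        have ht : t ≠ 0 := by rintro rfl; simp at h0
        refine hs ⟨t⁻¹, ?_⟩
        field_simp
        linear_combination -h0
      field_simp
      ring⟩
  invFun p := if p.1.1 = -1 then none else some (p.1.2 / (p.1.1 + 1))
  left_inv o := by
    match o with
    | none => simp
    | some t =>
      have key : (1 - s * t ^ 2) ≠ 0 := by
        intro h0
        have ht : t ≠ 0 := by rintro rfl; simp at h0
        refine hs ⟨t⁻¹, ?_⟩
        field_simp
        linear_combination -h0
      have hne : (1 + s * t ^ 2) / (1 - s * t ^ 2) ≠ -1 := by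
        intro h0
        rw [div_eq_iff key] at h0
        apply h2
        linear_combination h0
      show (if _ then _ else _) = some t
      simp only [Option.elim]
      simp only [hne, ↓reduceIte]
      congr 1
      have hden : (1 + s * t ^ 2) / (1 - s * t ^ 2) + 1 = 2 / (1 - s * t ^ 2) := by
        field_simp
        ring
      rw [hden]
      field_simp
      exact mul_div_cancel_right₀ t (by contrapose! key; linear_combination key)
  right_inv p := by
    obtain ⟨⟨u, v⟩, hp⟩ := p
    simp only at hp
    by_cases hu : u = -1
    · simp only [if_pos hu]
      have hv : v = 0 := by
        have h0 : s * v ^ 2 = 0 := by rw [hu] at hp; linear_combination -hp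
        rcases mul_eq_zero.1 h0 with h | h
        · exact absurd h (fun h => hs (h ▸ ⟨0, by ring⟩))
        · exact pow_eq_zero_iff (n := 2) (by norm_num) |>.1 h
      refine Subtype.ext ?_
      show ((-1 : F), (0 : F)) = (u, v)
      rw [hu, hv]
    · simp only [if_neg hu]
      have hu1 : u + 1 ≠ 0 := fun h => hu (by linear_combination h)
      have h1 : 1 - s * (v / (u + 1)) ^ 2 = 2 / (u + 1) := by
        field_simp
        linear_combination hp
      have h2' : 1 + s * (v / (u + 1)) ^ 2 = 2 * u / (u + 1) := by
        field_simp
        linear_combination -hp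
      refine Subtype.ext (Prod.ext ?_ ?_)
      · show (1 + s * (v / (u + 1)) ^ 2) / (1 - s * (v / (u + 1)) ^ 2) = u
        rw [h1, h2']
        field_simp
      · show 2 * (v / (u + 1)) / (1 - s * (v / (u + 1)) ^ 2) = v
        rw [h1]
        field_simp

lemma charpoly_fin2 (M : M2) :
    M.charpoly = X ^ 2 - C M.trace * X + C M.det := by
  rw [Matrix.charpoly, Matrix.det_fin_two, Matrix.trace_fin_two, Matrix.det_fin_two]
  simp [charmatrix_apply_eq, charmatrix_apply_ne]
  ring

lemma irred_quad (s : F) :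
    Irreducible (X ^ 2 - C s : F[X]) ↔ ¬ IsSquare s := by
  have hd : (X ^ 2 - C s : F[X]).natDegree = 2 := Polynomial.natDegree_X_pow_sub_C
  have h0 : (X ^ 2 - C s : F[X]) ≠ 0 := fun h => by simp [h] at hd
  rw [irreducible_iff_roots_eq_zero_of_degree_le_three (by omega) (by omega)]
  rw [Multiset.eq_zero_iff_forall_notMem]
  constructor
  · rintro h ⟨r, rfl⟩
    refine h r ?_
    rw [mem_roots h0, IsRoot.def]
    simp [sq]
  · intro h r hr
    rw [mem_roots h0, IsRoot.def] at hr
    simp only [eval_sub, eval_pow, eval_X, eval_C, sub_eq_zero] at hr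
    exact h ⟨r, by rw [← hr, sq]⟩

lemma ell_data (X : M2) (h0 : X.trace = 0) (hirr : Irreducible X.charpoly) :
    ¬ IsSquare (X 0 0 ^ 2 + X 0 1 * X 1 0) ∧ X 0 1 ≠ 0 ∧ X 1 1 = - X 0 0 := by
  have h11 : X 1 1 = - X 0 0 := by
    rw [Matrix.trace_fin_two] at h0; linear_combination h0
  have hcp : X.charpoly = Polynomial.X ^ 2 - C (X 0 0 ^ 2 + X 0 1 * X 1 0) := by
    rw [charpoly_fin2, h0, Matrix.det_fin_two, h11]
    rw [map_zero, zero_mul, sub_zero]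
    rw [show X 0 0 * -X 0 0 - X 0 1 * X 1 0 = -(X 0 0 ^ 2 + X 0 1 * X 1 0) by ring, map_neg]
    ring
  rw [hcp] at hirr
  have hs := (irred_quad _).1 hirr
  refine ⟨hs, ?_, h11⟩
  intro hb
  exact hs ⟨X 0 0, by rw [hb]; ring⟩

lemma eta_ell (X : M2) (h11 : X 1 1 = - X 0 0) :
    X = !![X 0 0, X 0 1; X 1 0, - X 0 0] := by
  rw [← h11]
  exact Matrix.etaExpand_eq X |>.symm

end EllipticAux

namespace EllipticAux

variable {F : Type} [Field F] [Fintype F] [DecidableEq F]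

local notation "M2" => Matrix (Fin 2) (Fin 2) F
local notation "SL2" => Matrix.SpecialLinearGroup (Fin 2) F

lemma stab_eqns (X : M2) (h11 : X 1 1 = - X 0 0)
    (g : SL2) (hg : (g : M2) * X = X * (g : M2)) :
    (g : M2) 0 1 * X 1 0 = X 0 1 * (g : M2) 1 0 ∧
    X 0 1 * (g : M2) 0 0 - X 0 1 * (g : M2) 1 1 = 2 * X 0 0 * (g : M2) 0 1 := by
  have e00 := congrFun (congrFun hg 0) 0
  have e01 := congrFun (congrFun hg 0) 1
  simp only [Matrix.mul_apply, Fin.sum_univ_two, h11] at e00 e01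
  constructor
  · linear_combination e00
  · linear_combination e01

def stabEquiv (X : M2) (h0 : X.trace = 0) (hirr : Irreducible X.charpoly) :
    MulAction.stabilizer (Matrix.SpecialLinearGroup (Fin 2) F) X ≃
      {p : F × F // p.1 ^ 2 - (X 0 0 ^ 2 + X 0 1 * X 1 0) * p.2 ^ 2 = 1} where
  toFun g := ⟨((g.1 : M2) 0 0 - ((g.1 : M2) 0 1 / X 0 1) * X 0 0, (g.1 : M2) 0 1 / X 0 1), by
    obtain ⟨hs, hb, h11⟩ := ell_data X h0 hirr
    obtain ⟨e1, e2⟩ := stab_eqns X h11 g.1 ((mem_stab_iff g.1 X).1 g.2)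
    have hdet : (g.1 : M2) 0 0 * (g.1 : M2) 1 1 - (g.1 : M2) 0 1 * (g.1 : M2) 1 0 = 1 := by
      have := g.1.2
      rwa [Matrix.det_fin_two] at this
    field_simp
    linear_combination (X 0 1 * (g.1 : M2) 0 0) * e2
      - X 0 1 * (g.1 : M2) 0 1 * e1 + X 0 1 ^ 2 * hdet⟩
  invFun p := ⟨⟨!![p.1.1 + p.1.2 * X 0 0, p.1.2 * X 0 1;
        p.1.2 * X 1 0, p.1.1 - p.1.2 * X 0 0], by
      rw [Matrix.det_fin_two_of]
      linear_combination p.2⟩, by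
    obtain ⟨hs, hb, h11⟩ := ell_data X h0 hirr
    refine (mem_stab_iff _ _).2 ?_
    ext i j
    fin_cases i <;> fin_cases j <;>
      simp [Matrix.mul_apply, Fin.sum_univ_two, h11] <;> ring⟩
  left_inv g := by
    obtain ⟨hs, hb, h11⟩ := ell_data X h0 hirr
    obtain ⟨e1, e2⟩ := stab_eqns X h11 g.1 ((mem_stab_iff g.1 X).1 g.2)
    refine Subtype.ext (Subtype.ext ?_)
    show (!![_,_;_,_] : M2) = (g.1 : M2)
    ext i j
    fin_cases i <;> fin_cases j <;> simp <;> field_simp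
    · linear_combination e1
    · linear_combination e2
  right_inv p := by
    obtain ⟨hs, hb, h11⟩ := ell_data X h0 hirr
    refine Subtype.ext (Prod.ext ?_ ?_) <;> simp <;> field_simp <;> ring

end EllipticAux

namespace EllipticAux

variable {F : Type} [Field F] [Fintype F] [DecidableEq F]

local notation "M2" => Matrix (Fin 2) (Fin 2) F
local notation "SL2" => Matrix.SpecialLinearGroup (Fin 2) F

def orbitSet (X : M2) : Set M2 :=
  {Y | ∃ g : SL2, Y = (g : M2) * X * ((g⁻¹ : SL2) : M2)}

lemma orbitSet_eq (X : M2) : orbitSet X = MulAction.orbit (Matrix.SpecialLinearGroup (Fin 2) F) X := by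
  ext Y
  constructor
  · rintro ⟨g, rfl⟩; exact ⟨g, rfl⟩
  · rintro ⟨g, rfl⟩; exact ⟨g, rfl⟩

lemma conj_trace (X : M2) (g : SL2) :
    ((g : M2) * X * ((g⁻¹ : SL2) : M2)).trace = X.trace := by
  rw [Matrix.trace_mul_cycle, ← Matrix.SpecialLinearGroup.coe_mul, inv_mul_cancel,
    Matrix.SpecialLinearGroup.coe_one, one_mul]

lemma conj_charpoly (X : M2) (g : SL2) :
    ((g : M2) * X * ((g⁻¹ : SL2) : M2)).charpoly = X.charpoly := by
  rw [charpoly_fin2, charpoly_fin2, conj_trace]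
  congr 2
  rw [Matrix.det_mul, Matrix.det_mul, Matrix.SpecialLinearGroup.det_coe,
    Matrix.SpecialLinearGroup.det_coe, one_mul, mul_one]

lemma two_ne_zero_of_odd_card (hodd : Odd (Fintype.card F)) : (2 : F) ≠ 0 := by
  intro h2
  have hd : ringChar F ∣ 2 := by
    have := (CharP.cast_eq_zero_iff F (ringChar F) 2).1 (by exact_mod_cast h2)
    exact this
  have hp : (ringChar F).Prime := CharP.char_is_prime F (ringChar F)
  have : ringChar F = 2 := (Nat.prime_dvd_prime_iff_eq hp Nat.prime_two).1 hd
  have heven := FiniteField.even_card_of_char_two this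
  rw [Nat.odd_iff] at hodd
  omega

lemma card_SL2 : Nat.card (Matrix.SpecialLinearGroup (Fin 2) F) =
    (Fintype.card F ^ 2 - 1) * Fintype.card F := by
  rw [Nat.card_congr (eSL (F := F)), Nat.card_eq_fintype_card, Fintype.card_prod]
  congr 1
  rw [Fintype.card_subtype_compl, Fintype.card_subtype_eq (0 : F × F), Fintype.card_prod, sq]

lemma card_stab (X : M2) (h0 : X.trace = 0) (hirr : Irreducible X.charpoly)
    (hodd : Odd (Fintype.card F)) :
    Nat.card (MulAction.stabilizer (Matrix.SpecialLinearGroup (Fin 2) F) X) =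
      Fintype.card F + 1 := by
  obtain ⟨hs, hb, h11⟩ := ell_data X h0 hirr
  rw [Nat.card_congr (stabEquiv X h0 hirr),
    Nat.card_congr (eConic _ hs (two_ne_zero_of_odd_card hodd)).symm,
    Nat.card_eq_fintype_card, Fintype.card_option]

lemma card_orbit (X : M2) (h0 : X.trace = 0) (hirr : Irreducible X.charpoly)
    (hodd : Odd (Fintype.card F)) :
    Nat.card (MulAction.orbit (Matrix.SpecialLinearGroup (Fin 2) F) X) =
      (Fintype.card F - 1) * Fintype.card F := by
  classical
  set q := Fintype.card F with hq
  have hq1 : 1 ≤ q := Fintype.card_pos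
  letI : Fintype (MulAction.orbit (Matrix.SpecialLinearGroup (Fin 2) F) X) := Fintype.ofFinite _
  letI : Fintype (MulAction.stabilizer (Matrix.SpecialLinearGroup (Fin 2) F) X) :=
    Fintype.ofFinite _
  have hOS := MulAction.card_orbit_mul_card_stabilizer_eq_card_group
    (G := Matrix.SpecialLinearGroup (Fin 2) F) X
  rw [← Nat.card_eq_fintype_card, ← Nat.card_eq_fintype_card, ← Nat.card_eq_fintype_card] at hOS
  rw [card_SL2, card_stab X h0 hirr hodd] at hOS
  have hfact : (q ^ 2 - 1) * q = ((q - 1) * q) * (q + 1) := by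
    have h1 : 1 ≤ q ^ 2 := Nat.one_le_pow _ _ hq1
    zify [hq1, h1]
    ring
  rw [hfact] at hOS
  exact Nat.eq_of_mul_eq_mul_right (Nat.succ_pos q) hOS

def ellEquiv : {X : M2 // X.trace = 0 ∧ Irreducible X.charpoly} ≃
    F × {b : F // b ≠ 0} × {s : F // ¬ IsSquare s} where
  toFun X :=
    ⟨X.1 0 0, ⟨X.1 0 1, (ell_data X.1 X.2.1 X.2.2).2.1⟩,
      ⟨X.1 0 0 ^ 2 + X.1 0 1 * X.1 1 0, (ell_data X.1 X.2.1 X.2.2).1⟩⟩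
  invFun x := ⟨!![x.1, x.2.1.1; (x.2.2.1 - x.1 ^ 2) / x.2.1.1, -x.1], by
    constructor
    · rw [Matrix.trace_fin_two_of]; ring
    · have hdet : (!![x.1, x.2.1.1; (x.2.2.1 - x.1 ^ 2) / x.2.1.1, -x.1] : M2).det
          = -x.2.2.1 := by
        have hb : (x.2.1.1 : F) ≠ 0 := x.2.1.2
        rw [Matrix.det_fin_two_of]
        field_simp
        ring
      rw [charpoly_fin2, hdet, Matrix.trace_fin_two_of]
      rw [show x.1 + -x.1 = (0 : F) by ring, map_zero, zero_mul, sub_zero, map_neg]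
      rw [show Polynomial.X ^ 2 + -Polynomial.C x.2.2.1
          = Polynomial.X ^ 2 - Polynomial.C x.2.2.1 by ring]
      exact (irred_quad _).2 x.2.2.2⟩
  left_inv X := by
    obtain ⟨hs, hb, h11⟩ := ell_data X.1 X.2.1 X.2.2
    refine Subtype.ext ?_
    ext i j
    fin_cases i <;> fin_cases j <;> simp [h11] <;> field_simp
  right_inv x := by
    have hb : (x.2.1.1 : F) ≠ 0 := x.2.1.2
    refine Prod.ext ?_ (Prod.ext (Subtype.ext ?_) (Subtype.ext ?_)) <;> simp
    field_simp
    ring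

end EllipticAux

lemma card_nonsquares (F : Type) [Field F] [Fintype F] [DecidableEq F]
    (hodd : Odd (Fintype.card F)) :
    2 * Nat.card {s : F // ¬ IsSquare s} = Fintype.card F - 1 := by
  have hchar : ringChar F ≠ 2 := by
    intro h
    have h2 := FiniteField.even_card_of_char_two h
    rw [Nat.odd_iff] at hodd
    omega
  obtain ⟨u, hu⟩ := FiniteField.exists_nonsquare (F := F) hchar
  have hu0 : u ≠ 0 := fun h => hu (h ▸ ⟨0, by ring⟩)
  classical
  set A : Finset F := Finset.univ.filter (fun s => ¬ IsSquare s) with hA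
  set B : Finset F := Finset.univ.filter (fun s => s ≠ 0 ∧ IsSquare s) with hB
  have hcardAB : A.card = B.card := by
    apply Finset.card_bij (fun a _ => u * a)
    · intro a ha
      simp only [hA, Finset.mem_filter, Finset.mem_univ, true_and] at ha
      have ha0 : a ≠ 0 := fun h => ha (h ▸ ⟨0, by ring⟩)
      simp only [hB, Finset.mem_filter, Finset.mem_univ, true_and]
      refine ⟨mul_ne_zero hu0 ha0, ?_⟩
      have h1 : quadraticChar F (u * a) = 1 := by
        rw [_root_.map_mul]
        rw [quadraticChar_neg_one_iff_not_isSquare.mpr hu,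
          quadraticChar_neg_one_iff_not_isSquare.mpr ha]
        ring
      exact (quadraticChar_one_iff_isSquare (mul_ne_zero hu0 ha0)).1 h1
    · intro a _ b _ h
      exact mul_left_cancel₀ hu0 h
    · intro b hb
      simp only [hB, Finset.mem_filter, Finset.mem_univ, true_and] at hb
      refine ⟨u⁻¹ * b, ?_, by field_simp⟩
      simp only [hA, Finset.mem_filter, Finset.mem_univ, true_and]
      rw [← quadraticChar_neg_one_iff_not_isSquare, _root_.map_mul]
      rw [(quadraticChar_one_iff_isSquare hb.1).2 hb.2]
      have : ¬ IsSquare u⁻¹ := fun h => hu (by simpa using h.inv)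
      rw [quadraticChar_neg_one_iff_not_isSquare.mpr this]
      ring
  have hunion : A ∪ B = Finset.univ.filter (fun s : F => s ≠ 0) := by
    ext s
    simp only [hA, hB, Finset.mem_union, Finset.mem_filter, Finset.mem_univ, true_and]
    constructor
    · rintro (h | h)
      · exact fun h0 => h (h0 ▸ ⟨0, by ring⟩)
      · exact h.1
    · intro h0
      by_cases hs : IsSquare s
      · exact Or.inr ⟨h0, hs⟩
      · exact Or.inl hs
  have hdisj : Disjoint A B := by
    rw [Finset.disjoint_left]
    intro s hs hs'
    simp only [hA, Finset.mem_filter] at hs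
    simp only [hB, Finset.mem_filter] at hs'
    exact hs.2 hs'.2.2
  have hcardU : (Finset.univ.filter (fun s : F => s ≠ 0)).card = Fintype.card F - 1 := by
    rw [Finset.filter_ne', Finset.card_erase_of_mem (Finset.mem_univ 0), Finset.card_univ]
  have hsum : A.card + B.card = Fintype.card F - 1 := by
    rw [← hcardU, ← hunion, Finset.card_union_of_disjoint hdisj]
  have hNat : Nat.card {s : F // ¬ IsSquare s} = A.card := by
    rw [Nat.card_eq_fintype_card, Fintype.card_subtype]
  omega

section Main

open EllipticAux


/-- For `q` a power of an odd prime, under the conjugation action of `SL(2,𝔽_q)` on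
`sl(2,𝔽_q)`, the set of elliptic elements (trace zero, irreducible characteristic
polynomial) decomposes into exactly `(q-1)/2` orbits, each of cardinality `(q-1)·q`. -/
theorem elliptic_orbit_count
    (q : ℕ) (hq : Odd q)
    (F : Type) [Field F] [Fintype F] [DecidableEq F] (hcard : Fintype.card F = q) :
    Nat.card {S : Set (Matrix (Fin 2) (Fin 2) F) //
        ∃ X : Matrix (Fin 2) (Fin 2) F, X.trace = 0 ∧ Irreducible X.charpoly ∧
          S = {Y | ∃ g : Matrix.SpecialLinearGroup (Fin 2) F,
                Y = (g : Matrix (Fin 2) (Fin 2) F) * X * ((g⁻¹ : Matrix.SpecialLinearGroup (Fin 2) F) : Matrix (Fin 2) (Fin 2) F)}}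
      = (q - 1) / 2
    ∧ ∀ X : Matrix (Fin 2) (Fin 2) F, X.trace = 0 → Irreducible X.charpoly →
        Nat.card {Y : Matrix (Fin 2) (Fin 2) F |
            ∃ g : Matrix.SpecialLinearGroup (Fin 2) F,
              Y = (g : Matrix (Fin 2) (Fin 2) F) * X * ((g⁻¹ : Matrix.SpecialLinearGroup (Fin 2) F) : Matrix (Fin 2) (Fin 2) F)}
          = (q - 1) * q := by
  classical
  subst hcard
  set q := Fintype.card F with hqdef
  have hodd : Odd q := hq
  have hq2 : 2 ≤ q := Fintype.one_lt_card
  -- part 2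
  have hpart2 : ∀ X : Matrix (Fin 2) (Fin 2) F, X.trace = 0 → Irreducible X.charpoly →
      Nat.card {Y : Matrix (Fin 2) (Fin 2) F |
          ∃ g : Matrix.SpecialLinearGroup (Fin 2) F,
            Y = (g : Matrix (Fin 2) (Fin 2) F) * X * ((g⁻¹ : Matrix.SpecialLinearGroup (Fin 2) F) : Matrix (Fin 2) (Fin 2) F)}
        = (q - 1) * q := by
    intro X h0 hirr
    have hset : {Y : Matrix (Fin 2) (Fin 2) F |
        ∃ g : Matrix.SpecialLinearGroup (Fin 2) F,
          Y = (g : Matrix (Fin 2) (Fin 2) F) * X * ((g⁻¹ : Matrix.SpecialLinearGroup (Fin 2) F) : Matrix (Fin 2) (Fin 2) F)}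
        = MulAction.orbit (Matrix.SpecialLinearGroup (Fin 2) F) X := orbitSet_eq X
    rw [hset]
    exact card_orbit X h0 hirr hodd
  refine ⟨?_, hpart2⟩
  -- part 1
  set T := {S : Set (Matrix (Fin 2) (Fin 2) F) //
      ∃ X : Matrix (Fin 2) (Fin 2) F, X.trace = 0 ∧ Irreducible X.charpoly ∧
        S = {Y | ∃ g : Matrix.SpecialLinearGroup (Fin 2) F,
              Y = (g : Matrix (Fin 2) (Fin 2) F) * X * ((g⁻¹ : Matrix.SpecialLinearGroup (Fin 2) F) : Matrix (Fin 2) (Fin 2) F)}} with hT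
  have e : {X : Matrix (Fin 2) (Fin 2) F // X.trace = 0 ∧ Irreducible X.charpoly} ≃
      Σ S : T, ↥S.1 := by
    refine ⟨fun X => ⟨⟨orbitSet X.1, ⟨X.1, X.2.1, X.2.2, rfl⟩⟩,
        ⟨X.1, ⟨1, by simp⟩⟩⟩,
      fun Sy => ⟨Sy.2.1, ?_⟩, fun X => Subtype.ext rfl, fun Sy => ?_⟩
    · obtain ⟨X₀, h1, h2, h3⟩ := Sy.1.2
      have hY := Sy.2.2
      have h3' : Sy.1.1 = orbitSet X₀ := h3
      obtain ⟨g, hg⟩ := (Set.ext_iff.1 h3' _).1 hY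
      rw [hg]
      exact ⟨by rw [conj_trace]; exact h1, by rw [conj_charpoly]; exact h2⟩
    · obtain ⟨S, Y⟩ := Sy
      have key : orbitSet (Y.1 : Matrix (Fin 2) (Fin 2) F) = S.1 := by
        obtain ⟨X₀, h1, h2, h3⟩ := S.2
        have h3' : S.1 = orbitSet X₀ := h3
        have hYmem : (Y.1 : Matrix (Fin 2) (Fin 2) F) ∈
            MulAction.orbit (Matrix.SpecialLinearGroup (Fin 2) F) X₀ := by
          rw [← orbitSet_eq]
          exact (Set.ext_iff.1 h3' _).1 Y.2
        refine Eq.trans ?_ h3'.symm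
        rw [orbitSet_eq, orbitSet_eq]
        exact MulAction.orbit_eq_iff.mpr hYmem
      refine Sigma.ext (Subtype.ext key) ?_
      exact (Subtype.heq_iff_coe_eq
        (fun x => Iff.of_eq (congrArg (fun s => x ∈ s) key))).mpr rfl
  -- counting
  letI : Fintype T := Fintype.ofFinite _
  letI : ∀ S : T, Fintype ↥S.1 := fun S => Fintype.ofFinite _
  have hcardE : Nat.card {X : Matrix (Fin 2) (Fin 2) F // X.trace = 0 ∧ Irreducible X.charpoly}
      = Nat.card T * ((q - 1) * q) := by
    rw [Nat.card_congr e, Nat.card_eq_fintype_card, Fintype.card_sigma]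
    have hfiber : ∀ S : T, Fintype.card ↥S.1 = (q - 1) * q := by
      intro S
      obtain ⟨X₀, h1, h2, h3⟩ := S.2
      have h3' : S.1 = orbitSet X₀ := h3
      rw [← Nat.card_eq_fintype_card, h3', orbitSet_eq]
      exact card_orbit X₀ h1 h2 hodd
    rw [Finset.sum_congr rfl (fun S _ => hfiber S), Finset.sum_const, Finset.card_univ,
      Nat.card_eq_fintype_card, smul_eq_mul]
  have hcardE2 : Nat.card {X : Matrix (Fin 2) (Fin 2) F // X.trace = 0 ∧ Irreducible X.charpoly}
      = q * ((q - 1) * Nat.card {s : F // ¬ IsSquare s}) := by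
    rw [Nat.card_congr (ellEquiv (F := F)), Nat.card_prod, Nat.card_prod]
    congr 2
    · exact Nat.card_eq_fintype_card
    · rw [Nat.card_eq_fintype_card, Fintype.card_subtype_compl, Fintype.card_subtype_eq (0 : F)]
  have hns := card_nonsquares F hodd
  set ns := Nat.card {s : F // ¬ IsSquare s} with hnsdef
  have hcancel : Nat.card T = ns := by
    have h1 : Nat.card T * ((q - 1) * q) = ns * ((q - 1) * q) := by
      rw [← hcardE, hcardE2]; ring
    exact Nat.eq_of_mul_eq_mul_right (Nat.mul_pos (by omega) (by omega)) h1
  rw [hcancel]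
  have hq1 := hns
  rw [Nat.odd_iff] at hodd
  omega

end Main
end

section
/- Let q be a power of an odd prime. The set of elliptic elements of sl(2,𝔽_q) has cardinality q·(q−1)²/2. -/
open Polynomial Matrix Finset

section aux

variable {F : Type} [Field F] [Fintype F] [DecidableEq F]

omit [Fintype F] [DecidableEq F] in
lemma charpoly_two' (M : Matrix (Fin 2) (Fin 2) F) :
    M.charpoly = X ^ 2 - C (M 0 0 + M 1 1) * X + C (M 0 0 * M 1 1 - M 0 1 * M 1 0) := by
  rw [Matrix.charpoly, Matrix.det_fin_two, charmatrix_apply_eq, charmatrix_apply_eq,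
    charmatrix_apply_ne _ _ _ (by decide), charmatrix_apply_ne _ _ _ (by decide)]
  simp only [map_add, map_sub, _root_.map_mul]
  ring

omit [Fintype F] [DecidableEq F] in
lemma charpoly_tracezero (M : Matrix (Fin 2) (Fin 2) F) (htr : M.trace = 0) :
    M.charpoly = X ^ 2 - C (M 0 0 ^ 2 + M 0 1 * M 1 0) := by
  rw [Matrix.trace_fin_two] at htr
  have h11 : M 1 1 = -M 0 0 := by linear_combination htr
  rw [charpoly_two', h11, show M 0 0 + -M 0 0 = 0 by ring,
    show M 0 0 * -M 0 0 - M 0 1 * M 1 0 = -(M 0 0 ^ 2 + M 0 1 * M 1 0) by ring,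
    map_zero, map_neg]
  ring

omit [Fintype F] [DecidableEq F] in
lemma irred_iff' (s : F) : Irreducible (X ^ 2 - C s : F[X]) ↔ ¬ IsSquare s := by
  rw [X_pow_sub_C_irreducible_iff_of_prime Nat.prime_two]
  constructor
  · rintro h ⟨r, rfl⟩
    exact h r (by ring)
  · intro h b hb
    exact h ⟨b, by rw [← hb]; ring⟩

omit [Fintype F] [DecidableEq F] in
lemma elliptic_iff (M : Matrix (Fin 2) (Fin 2) F) (htr : M.trace = 0) :
    Irreducible M.charpoly ↔ ¬ IsSquare (M 0 0 ^ 2 + M 0 1 * M 1 0) := by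
  rw [charpoly_tracezero M htr, irred_iff']

lemma two_mul_card_nonsquares (hodd : Odd (Fintype.card F)) :
    2 * (Finset.univ.filter fun a : F => ¬ IsSquare a).card = Fintype.card F - 1 := by
  have hF : ringChar F ≠ 2 := by
    intro h
    have := FiniteField.even_card_of_char_two h
    obtain ⟨k, hk⟩ := hodd
    omega
  have hsum := quadraticChar_sum_zero (F := F) hF
  classical
  set N : Finset F := Finset.univ.filter fun a : F => ¬ IsSquare a with hN
  set S : Finset F := Finset.univ.filter fun a : F => a ≠ 0 ∧ IsSquare a with hS
  have hdisj : Disjoint S N := by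
    simp only [hS, hN, Finset.disjoint_filter]
    tauto
  have hins : insert (0 : F) (S ∪ N) = Finset.univ := by
    ext a
    by_cases h0 : a = 0 <;> simp [hS, hN, h0] <;> tauto
  have h0mem : (0 : F) ∉ S ∪ N := by
    simp [hS, hN, IsSquare.zero]
  have hsplit : (1 + S.card) + N.card = Fintype.card F := by
    have := Finset.card_insert_of_notMem h0mem
    rw [hins] at this
    rw [Finset.card_union_of_disjoint hdisj] at this
    simp only [Finset.card_univ] at this
    omega
  -- evaluate the character sum
  have hsumS : ∑ a ∈ S, quadraticChar F a = (S.card : ℤ) := by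
    have hc : ∀ a ∈ S, quadraticChar F a = 1 := by
      intro a ha
      rw [hS, Finset.mem_filter] at ha
      exact (quadraticChar_one_iff_isSquare ha.2.1).2 ha.2.2
    rw [Finset.sum_congr rfl hc, Finset.sum_const, nsmul_eq_mul, mul_one]
  have hsumN : ∑ a ∈ N, quadraticChar F a = -(N.card : ℤ) := by
    have hc : ∀ a ∈ N, quadraticChar F a = -1 := by
      intro a ha
      rw [hN, Finset.mem_filter] at ha
      exact quadraticChar_neg_one_iff_not_isSquare.2 ha.2
    rw [Finset.sum_congr rfl hc, Finset.sum_const, nsmul_eq_mul, mul_neg_one]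
  have key : (0 : ℤ) + ((S.card : ℤ) + -(N.card : ℤ)) = 0 := by
    calc (0 : ℤ) + ((S.card : ℤ) + -(N.card : ℤ))
        = quadraticChar F 0 + (∑ a ∈ S, quadraticChar F a
            + ∑ a ∈ N, quadraticChar F a) := by
          rw [hsumS, hsumN, quadraticChar_zero]
      _ = ∑ a ∈ insert (0 : F) (S ∪ N), quadraticChar F a := by
          rw [Finset.sum_insert h0mem, Finset.sum_union hdisj]
      _ = ∑ a : F, quadraticChar F a := by rw [hins]
      _ = 0 := hsum
  have hSN : S.card = N.card := by omega
  omega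

def sl2EllipticEquiv :
    {X : Matrix (Fin 2) (Fin 2) F // X.trace = 0 ∧ Irreducible X.charpoly} ≃
      F × {n : F // ¬ IsSquare n} × {b : F // b ≠ 0} where
  toFun X :=
    ⟨X.1 0 0,
      ⟨X.1 0 0 ^ 2 + X.1 0 1 * X.1 1 0, (elliptic_iff X.1 X.2.1).1 X.2.2⟩,
      ⟨X.1 0 1, by
        intro hb
        exact (elliptic_iff X.1 X.2.1).1 X.2.2 ⟨X.1 0 0, by rw [hb]; ring⟩⟩⟩
  invFun p :=
    ⟨!![p.1, p.2.2.1; (p.2.1.1 - p.1 ^ 2) / p.2.2.1, -p.1], by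
      rw [Matrix.trace_fin_two]; simp, by
      rw [elliptic_iff]
      · show ¬ IsSquare (p.1 ^ 2 + p.2.2.1 * ((p.2.1.1 - p.1 ^ 2) / p.2.2.1))
        rw [mul_div_cancel₀ _ p.2.2.2]
        convert p.2.1.2 using 2
        ring
      · rw [Matrix.trace_fin_two]; simp⟩
  left_inv := by
    rintro ⟨M, htr, hirr⟩
    have hu : M 0 1 ≠ 0 := by
      intro hb
      exact (elliptic_iff M htr).1 hirr ⟨M 0 0, by rw [hb]; ring⟩
    have h11 : M 1 1 = -M 0 0 := by
      rw [Matrix.trace_fin_two] at htr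
      linear_combination htr
    apply Subtype.ext
    show !![M 0 0, M 0 1; (M 0 0 ^ 2 + M 0 1 * M 1 0 - M 0 0 ^ 2) / M 0 1, -M 0 0] = M
    have hc : (M 0 0 ^ 2 + M 0 1 * M 1 0 - M 0 0 ^ 2) / M 0 1 = M 1 0 := by
      rw [add_sub_cancel_left, mul_comm, mul_div_assoc, div_self hu, mul_one]
    rw [hc, ← h11]
    ext i j
    fin_cases i <;> fin_cases j <;> simp
  right_inv := by
    rintro ⟨a, ⟨n, hn⟩, ⟨u, hu⟩⟩
    show (⟨a, ⟨a ^ 2 + u * ((n - a ^ 2) / u), _⟩, ⟨u, _⟩⟩ :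
      F × {n : F // ¬ IsSquare n} × {b : F // b ≠ 0}) = _
    have : a ^ 2 + u * ((n - a ^ 2) / u) = n := by
      rw [mul_div_cancel₀ _ hu]; ring
    exact Prod.ext rfl (Prod.ext (Subtype.ext this) rfl)

end aux

/-- For `q` a power of an odd prime, the set of elliptic elements of `sl(2,𝔽_q)`
(trace-zero `2×2` matrices with irreducible characteristic polynomial) has
cardinality `q·(q-1)²/2`. -/
theorem card_elliptic_sl2
    (q : ℕ) (hq : Odd q)
    (F : Type) [Field F] [Fintype F] [DecidableEq F] (hcard : Fintype.card F = q) :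
    Nat.card {X : Matrix (Fin 2) (Fin 2) F // X.trace = 0 ∧ Irreducible X.charpoly}
      = q * (q - 1) ^ 2 / 2 := by
  classical
  have hoddF : Odd (Fintype.card F) := hcard ▸ hq
  have hns := two_mul_card_nonsquares (F := F) hoddF
  set ns := (Finset.univ.filter fun a : F => ¬ IsSquare a).card with hnsdef
  have h1 : Nat.card {X : Matrix (Fin 2) (Fin 2) F // X.trace = 0 ∧ Irreducible X.charpoly}
      = Nat.card (F × {n : F // ¬ IsSquare n} × {b : F // b ≠ 0}) :=
    Nat.card_congr sl2EllipticEquiv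
  rw [h1, Nat.card_prod, Nat.card_prod, Nat.card_eq_fintype_card, Nat.card_eq_fintype_card,
    Nat.card_eq_fintype_card, hcard]
  have h2 : Fintype.card {n : F // ¬ IsSquare n} = ns := by
    rw [Fintype.card_subtype]
  have h3 : Fintype.card {b : F // b ≠ 0} = q - 1 := by
    rw [Fintype.card_subtype_compl, Fintype.card_subtype_eq, hcard]
  rw [h2, h3]
  rw [hcard] at hns
  have hkey : q * (q - 1) ^ 2 = 2 * (q * (ns * (q - 1))) := by
    rw [pow_two, ← hns]; ring
  omega
end

section
/- Let p be an odd prime and let Y be a 2×2 matrix over ℚ_p with trace(Y) = 0 and det(Y) ≠ 0. Then there exist g ∈ GL(2,ℚ_p) and B, C ∈ ℚ_p^× such that g·Y·g^{-1} is the anti-diagonal matrix [[0, B], [C, 0]] and the p-adic valuations satisfy v(B) ≤ v(C) ≤ v(B) + 1. -/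
open Matrix

section aux
variable {p : ℕ} [Fact p.Prime]

private lemma pval_inv (x : ℚ_[p]) (hx : x ≠ 0) : x⁻¹.valuation = -x.valuation := by
  have h := Padic.valuation_mul hx (inv_ne_zero hx)
  rw [mul_inv_cancel₀ hx, Padic.valuation_one] at h
  linarith

private lemma pval_zpow (m : ℤ) : ((p : ℚ_[p]) ^ m).valuation = m := by
  have hp : (p : ℚ_[p]) ≠ 0 := by
    exact_mod_cast Nat.cast_ne_zero.mpr (Fact.out : p.Prime).ne_zero
  have hn : ∀ n : ℕ, ((p : ℚ_[p]) ^ n).valuation = n := by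
    intro n
    induction n with
    | zero => simp
    | succ k ih =>
      rw [pow_succ, Padic.valuation_mul (pow_ne_zero _ hp) hp, ih, Padic.valuation_p]
      push_cast; ring
  rcases m with n | n
  · simpa using hn n
  · rw [zpow_negSucc, pval_inv _ (pow_ne_zero _ hp), hn]
    simp [Int.negSucc_eq]

private lemma conj_main (a b c B : ℚ_[p]) (hb : b ≠ 0) (hB : B ≠ 0) :
    !![B/b, 0; a/b, 1] * !![a, b; c, -a] * !![b/B, 0; -a/B, 1]
      = !![0, B; (a^2 + b*c)/B, 0] := by
  ext i j
  fin_cases i <;> fin_cases j <;>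
    simp [Matrix.mul_apply, Fin.sum_univ_two] <;> field_simp <;> ring

private lemma inv_pair (a b B : ℚ_[p]) (hb : b ≠ 0) (hB : B ≠ 0) :
    !![B/b, 0; a/b, 1] * !![b/B, 0; -a/B, 1] = 1 ∧
      !![b/B, 0; -a/B, 1] * !![B/b, 0; a/b, 1] = 1 := by
  constructor <;>
    · ext i j
      fin_cases i <;> fin_cases j <;>
        simp [Matrix.mul_apply, Fin.sum_univ_two, Matrix.one_apply] <;>
        field_simp <;> ring

end aux

/-- For `p` an odd prime and `Y` a `2×2` matrix over `ℚ_p` with trace `0` and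
nonzero determinant, there are `g ∈ GL(2,ℚ_p)` and `B, C ∈ ℚ_p^×` such that
`g·Y·g⁻¹ = !![0, B; C, 0]` with `v(B) ≤ v(C) ≤ v(B) + 1`. -/
theorem antidiagonal_conjugate_exists
    (p : ℕ) [Fact p.Prime] (hp : Odd p)
    (Y : Matrix (Fin 2) (Fin 2) ℚ_[p]) (htr : Y.trace = 0) (hdet : Y.det ≠ 0) :
    ∃ g : GL (Fin 2) ℚ_[p], ∃ B C : ℚ_[p], B ≠ 0 ∧ C ≠ 0 ∧
      (g : Matrix (Fin 2) (Fin 2) ℚ_[p]) * Y * ((g⁻¹ : GL (Fin 2) ℚ_[p]) : Matrix (Fin 2) (Fin 2) ℚ_[p])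
        = !![0, B; C, 0] ∧
      B.valuation ≤ C.valuation ∧ C.valuation ≤ B.valuation + 1 := by
  classical
  have hp0 : (p : ℚ_[p]) ≠ 0 := by
    exact_mod_cast Nat.cast_ne_zero.mpr (Fact.out : p.Prime).ne_zero
  -- Step 1: find a unit u such that Y' := u Y u⁻¹ has nonzero (0,1) entry.
  have step1 : ∃ u : GL (Fin 2) ℚ_[p],
      ((u : Matrix (Fin 2) (Fin 2) ℚ_[p]) * Y *
        ((u⁻¹ : GL (Fin 2) ℚ_[p]) : Matrix (Fin 2) (Fin 2) ℚ_[p])) 0 1 ≠ 0 := by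
    have h11 : Y 1 1 = -Y 0 0 := by
      have h := htr
      rw [Matrix.trace_fin_two] at h
      linear_combination h
    by_cases hb : Y 0 1 ≠ 0
    · refine ⟨1, ?_⟩
      simpa using hb
    push_neg at hb
    have w : Matrix (Fin 2) (Fin 2) ℚ_[p] := 0
    by_cases hc : Y 1 0 ≠ 0
    · have hw1 : (!![(0:ℚ_[p]),1;1,0] : Matrix (Fin 2) (Fin 2) ℚ_[p]) * !![0,1;1,0] = 1 := by
        ext i j
        fin_cases i <;> fin_cases j <;>
          simp [Matrix.mul_apply, Fin.sum_univ_two, Matrix.one_apply]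
      refine ⟨⟨!![0,1;1,0], !![0,1;1,0], hw1, hw1⟩, ?_⟩
      have he : ((!![(0:ℚ_[p]),1;1,0] * Y * !![0,1;1,0] : Matrix (Fin 2) (Fin 2) ℚ_[p])) 0 1
          = Y 1 0 := by
        simp [Matrix.mul_apply, Matrix.vecMul, dotProduct, Fin.sum_univ_two]
      show ((!![(0:ℚ_[p]),1;1,0] * Y * !![0,1;1,0] : Matrix (Fin 2) (Fin 2) ℚ_[p])) 0 1 ≠ 0
      rw [he]; exact hc
    · push_neg at hc
      have ha : Y 0 0 ≠ 0 := by
        intro h0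
        apply hdet
        rw [Matrix.det_fin_two, hb, hc, h11, h0]
        ring
      have hw1 : (!![(1:ℚ_[p]),1;0,1] : Matrix (Fin 2) (Fin 2) ℚ_[p]) * !![1,-1;0,1] = 1 := by
        ext i j
        fin_cases i <;> fin_cases j <;>
          simp [Matrix.mul_apply, Fin.sum_univ_two, Matrix.one_apply]
      have hw2 : (!![(1:ℚ_[p]),-1;0,1] : Matrix (Fin 2) (Fin 2) ℚ_[p]) * !![1,1;0,1] = 1 := by
        ext i j
        fin_cases i <;> fin_cases j <;>
          simp [Matrix.mul_apply, Fin.sum_univ_two, Matrix.one_apply]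
      refine ⟨⟨!![1,1;0,1], !![1,-1;0,1], hw1, hw2⟩, ?_⟩
      have he : ((!![(1:ℚ_[p]),1;0,1] * Y * !![1,-1;0,1] : Matrix (Fin 2) (Fin 2) ℚ_[p])) 0 1
          = -(2 * Y 0 0) := by
        simp [Matrix.mul_apply, Matrix.vecMul, dotProduct, Fin.sum_univ_two, hb, hc, h11]
        ring
      show ((!![(1:ℚ_[p]),1;0,1] * Y * !![1,-1;0,1] : Matrix (Fin 2) (Fin 2) ℚ_[p])) 0 1 ≠ 0
      rw [he]
      exact neg_ne_zero.mpr (mul_ne_zero two_ne_zero ha)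
  obtain ⟨u, hu⟩ := step1
  set Y' : Matrix (Fin 2) (Fin 2) ℚ_[p] :=
    (u : Matrix (Fin 2) (Fin 2) ℚ_[p]) * Y *
      ((u⁻¹ : GL (Fin 2) ℚ_[p]) : Matrix (Fin 2) (Fin 2) ℚ_[p]) with hY'
  have huinv : ((u⁻¹ : GL (Fin 2) ℚ_[p]) : Matrix (Fin 2) (Fin 2) ℚ_[p]) *
      (u : Matrix (Fin 2) (Fin 2) ℚ_[p]) = 1 := u.inv_mul
  have htr' : Y'.trace = 0 := by
    rw [hY', Matrix.trace_mul_comm, ← Matrix.mul_assoc, huinv, Matrix.one_mul, htr]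
  have hdet' : Y'.det = Y.det := by
    rw [hY', Matrix.det_mul, Matrix.det_mul]
    have h1 : (u : Matrix (Fin 2) (Fin 2) ℚ_[p]).det *
        ((u⁻¹ : GL (Fin 2) ℚ_[p]) : Matrix (Fin 2) (Fin 2) ℚ_[p]).det = 1 := by
      rw [← Matrix.det_mul, u.mul_inv, Matrix.det_one]
    linear_combination Y.det * h1
  -- names for entries of Y'
  set a : ℚ_[p] := Y' 0 0 with ha
  set b : ℚ_[p] := Y' 0 1 with hb
  set c : ℚ_[p] := Y' 1 0 with hc
  have hb0 : b ≠ 0 := hu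
  have h11' : Y' 1 1 = -a := by
    have h := htr'
    rw [Matrix.trace_fin_two] at h
    linear_combination h
  have hYeta : Y' = !![a, b; c, -a] := by
    rw [Matrix.eta_fin_two Y', h11']
  set D : ℚ_[p] := a^2 + b*c with hD
  have hDdet : D = -Y.det := by
    rw [← hdet', hYeta, Matrix.det_fin_two_of]
    ring
  have hD0 : D ≠ 0 := by
    rw [hDdet]
    exact neg_ne_zero.mpr hdet
  -- choose m with 2m ≤ v(D) ≤ 2m+1
  obtain ⟨m, hm⟩ : ∃ m : ℤ, 2*m ≤ D.valuation ∧ D.valuation ≤ 2*m + 1 := by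
    rcases Int.even_or_odd D.valuation with ⟨k, hk⟩ | ⟨k, hk⟩
    · exact ⟨k, by omega⟩
    · exact ⟨k, by omega⟩
  set B : ℚ_[p] := (p : ℚ_[p]) ^ m with hBdef
  have hB0 : B ≠ 0 := zpow_ne_zero _ hp0
  obtain ⟨hgi1, hgi2⟩ := inv_pair (p := p) a b B hb0 hB0
  set g₂ : GL (Fin 2) ℚ_[p] := ⟨!![B/b, 0; a/b, 1], !![b/B, 0; -a/B, 1], hgi1, hgi2⟩ with hg₂
  refine ⟨g₂ * u, B, D / B, hB0, div_ne_zero hD0 hB0, ?_, ?_, ?_⟩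
  · have hcoe : ((g₂ * u : GL (Fin 2) ℚ_[p]) : Matrix (Fin 2) (Fin 2) ℚ_[p])
        = (g₂ : Matrix (Fin 2) (Fin 2) ℚ_[p]) * (u : Matrix (Fin 2) (Fin 2) ℚ_[p]) := rfl
    have hcoe' : (((g₂ * u)⁻¹ : GL (Fin 2) ℚ_[p]) : Matrix (Fin 2) (Fin 2) ℚ_[p])
        = ((u⁻¹ : GL (Fin 2) ℚ_[p]) : Matrix (Fin 2) (Fin 2) ℚ_[p]) *
          ((g₂⁻¹ : GL (Fin 2) ℚ_[p]) : Matrix (Fin 2) (Fin 2) ℚ_[p]) := by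
      rw [_root_.mul_inv_rev]; rfl
    rw [hcoe, hcoe']
    have hmain := conj_main (p := p) a b c B hb0 hB0
    calc (g₂ : Matrix (Fin 2) (Fin 2) ℚ_[p]) * (u : Matrix (Fin 2) (Fin 2) ℚ_[p]) * Y *
          (((u⁻¹ : GL (Fin 2) ℚ_[p]) : Matrix (Fin 2) (Fin 2) ℚ_[p]) *
            ((g₂⁻¹ : GL (Fin 2) ℚ_[p]) : Matrix (Fin 2) (Fin 2) ℚ_[p]))
        = (g₂ : Matrix (Fin 2) (Fin 2) ℚ_[p]) * Y' *
            ((g₂⁻¹ : GL (Fin 2) ℚ_[p]) : Matrix (Fin 2) (Fin 2) ℚ_[p]) := by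
          rw [hY']; noncomm_ring
      _ = !![0, B; D/B, 0] := by
          rw [hYeta]
          have : ((g₂⁻¹ : GL (Fin 2) ℚ_[p]) : Matrix (Fin 2) (Fin 2) ℚ_[p])
              = !![b/B, 0; -a/B, 1] := rfl
          rw [this]
          have : (g₂ : Matrix (Fin 2) (Fin 2) ℚ_[p]) = !![B/b, 0; a/b, 1] := rfl
          rw [this, hmain, hD]
  · have hvB : B.valuation = m := pval_zpow m
    have hvC : (D / B).valuation = D.valuation - m := by
      rw [div_eq_mul_inv, Padic.valuation_mul hD0 (inv_ne_zero hB0),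
        pval_inv _ hB0, hvB]
      ring
    rw [hvB, hvC]; omega
  · have hvB : B.valuation = m := pval_zpow m
    have hvC : (D / B).valuation = D.valuation - m := by
      rw [div_eq_mul_inv, Padic.valuation_mul hD0 (inv_ne_zero hB0),
        pval_inv _ hB0, hvB]
      ring
    rw [hvB, hvC]; omega
end

section
/- Let p be an odd prime, let ψ : (ℚ_p,+) → ℂ^× be an additive character with conductor pℤ_p, and let μ be an additive Haar measure on ℚ_p. Let B, C ∈ ℚ_p^× satisfy v(B) = v(C) ≤ 0. For an integer ℓ ≥ 0 let T_ℓ = {(a,b,c) ∈ ℚ_p³ : a, b, c ∈ p^{-ℓ}ℤ_p and a² + b·c ∈ ℤ_p}. Then there exists L such that for all integers ℓ ≥ L, the integral over T_ℓ of ψ(b·C + c·B) with respect to the product measure μ³ equals 0. -/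
open MeasureTheory
open scoped ENNReal NNReal
set_option linter.unusedSectionVars false
set_option linter.unnecessarySimpa false
variable {p : ℕ} [Fact p.Prime] [MeasurableSpace ℚ_[p]] [BorelSpace ℚ_[p]]

lemma padic_sqrt (hp : Odd p) (w : ℚ_[p]) (hw : ‖w‖ ≤ 1) :
    ∃ η : ℚ_[p], η ^ 2 = 1 + p * w ∧ ‖η‖ = 1 := by
  have hpw : ‖(p : ℚ_[p]) * w‖ ≤ (p : ℝ)⁻¹ := by
    rw [norm_mul, Padic.norm_p]
    calc (p:ℝ)⁻¹ * ‖w‖ ≤ (p:ℝ)⁻¹ * 1 := by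
          apply mul_le_mul_of_nonneg_left hw (by positivity)
      _ = (p:ℝ)⁻¹ := mul_one _
  have hp1 : (1:ℝ) < (p:ℝ) := by exact_mod_cast (Fact.out : p.Prime).one_lt
  have hinv : (p : ℝ)⁻¹ < 1 := by
    rw [inv_lt_one_iff₀]; right; exact hp1
  have hple : ‖(p : ℚ_[p]) * w‖ ≤ 1 := le_trans hpw (le_of_lt hinv)
  set U : ℤ_[p] := ⟨1 + p * w, by
    refine le_trans (Padic.nonarchimedean _ _) (max_le (by simp) hple)⟩ with hU
  have h2 : ‖(2 : ℤ_[p])‖ = 1 := by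
    have hnd : ¬ ((p : ℤ) ∣ (2:ℤ)) := by
      intro h
      have h' : p ∣ 2 := by exact_mod_cast h
      have : p = 2 := (Nat.prime_dvd_prime_iff_eq Fact.out Nat.prime_two).1 h'
      rw [this] at hp; simpa [Nat.odd_iff] using hp
    have hle : ‖(2 : ℤ_[p])‖ ≤ 1 := PadicInt.norm_le_one _
    have : ¬ (‖((2:ℤ) : ℤ_[p])‖ < 1) := by
      rw [PadicInt.norm_int_lt_one_iff_dvd]; exact hnd
    push_cast at this
    exact le_antisymm hle (not_lt.1 this)
  -- Hensel
  set F : Polynomial ℤ_[p] := Polynomial.X ^ 2 - Polynomial.C U with hF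
  have hev1 : F.eval 1 = 1 - U := by simp [hF]
  have hder : F.derivative = Polynomial.C 2 * Polynomial.X := by
    simp [hF, Polynomial.derivative_X_pow]
    rw [← Polynomial.C_1, ← Polynomial.C_add]; norm_num
  have hdev : F.derivative.eval 1 = 2 := by simp [hder]
  have hnormev : ‖F.eval 1‖ < ‖F.derivative.eval 1‖ ^ 2 := by
    rw [hev1, hdev, h2]
    have hco : ((1 - U : ℤ_[p]) : ℚ_[p]) = -((p:ℚ_[p]) * w) := by
      rw [PadicInt.coe_sub, PadicInt.coe_one]; show (1:ℚ_[p]) - (1 + (p:ℚ_[p]) * w) = _; ring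
    have : ‖(1 : ℤ_[p]) - U‖ = ‖(p:ℚ_[p]) * w‖ := by
      rw [PadicInt.norm_def, hco, norm_neg]
    rw [this]
    calc ‖(p:ℚ_[p]) * w‖ ≤ (p:ℝ)⁻¹ := hpw
      _ < 1 := hinv
      _ = 1 ^ 2 := by norm_num
  obtain ⟨z, hz, -, -, -⟩ := hensels_lemma hnormev
  have hz2 : z ^ 2 = U := by
    have := hz
    simp [hF, sub_eq_zero] at this
    exact this
  refine ⟨(z : ℚ_[p]), ?_, ?_⟩
  · have : ((z ^ 2 : ℤ_[p]) : ℚ_[p]) = ((U : ℤ_[p]) : ℚ_[p]) := by exact_mod_cast congrArg _ hz2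
    push_cast at this
    simpa [hU] using this
  · have hUnorm : ‖U‖ = 1 := by
      rw [PadicInt.norm_def]
      have : ‖(1 : ℚ_[p]) + p * w‖ = 1 := by
        by_cases hzero : (p:ℚ_[p]) * w = 0
        · rw [hzero, add_zero, norm_one]
        · have hne : ‖(1:ℚ_[p])‖ ≠ ‖(p:ℚ_[p])*w‖ := by
            rw [norm_one]
            intro h
            rw [← h] at hpw
            linarith
          rw [Padic.add_eq_max_of_ne hne, norm_one]
          rw [max_eq_left (le_trans hpw (le_of_lt hinv))]
      simpa [hU] using this
    have hcoe : ((z : ℚ_[p]))^2 = ((U : ℤ_[p]) : ℚ_[p]) := by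
      exact_mod_cast congrArg (fun t : ℤ_[p] => (t : ℚ_[p])) hz2
    have : ‖(z:ℚ_[p])‖ ^ 2 = 1 := by
      rw [← norm_pow, hcoe, ← PadicInt.norm_def, hUnorm]
    nlinarith [norm_nonneg (z:ℚ_[p])]
lemma unit_ball_compact : IsCompact {x : ℚ_[p] | ‖x‖ ≤ 1} := by
  have : {x : ℚ_[p] | ‖x‖ ≤ 1} = Metric.closedBall 0 1 := by
    ext x; simp [Metric.mem_closedBall, dist_eq_norm]
  rw [this]
  exact isCompact_closedBall 0 1

lemma mp_unit (μ : Measure ℚ_[p]) [μ.IsAddHaarMeasure] (η : ℚ_[p]) (hη : ‖η‖ = 1) :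
    MeasurePreserving (fun x : ℚ_[p] => η * x) μ μ := by
  have hη0 : η ≠ 0 := by
    intro h; rw [h, norm_zero] at hη; norm_num at hη
  have hcont : Continuous (fun x : ℚ_[p] => η * x) := continuous_const.mul continuous_id
  have hmeas : Measurable (fun x : ℚ_[p] => η * x) := hcont.measurable
  set f : ℚ_[p] →+ ℚ_[p] := AddMonoidHom.mulLeft η with hf
  have hsurj : Function.Surjective (fun x : ℚ_[p] => η * x) := fun y => ⟨η⁻¹ * y, by field_simp⟩
  have hhomeo : ℚ_[p] ≃ₜ ℚ_[p] := Homeomorph.mulLeft₀ η hη0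
  have hcocompact : Filter.Tendsto (fun x : ℚ_[p] => η * x) (Filter.cocompact _) (Filter.cocompact _) :=
    (Homeomorph.mulLeft₀ η hη0).toCocompactMap.cocompact_tendsto'
  have : (μ.map (fun x : ℚ_[p] => η * x)).IsAddHaarMeasure :=
    Measure.isAddHaarMeasure_map μ f hcont hsurj hcocompact
  -- uniqueness
  have huniq := Measure.isAddLeftInvariant_eq_smul (μ.map (fun x : ℚ_[p] => η * x)) μ
  set c := (μ.map (fun x : ℚ_[p] => η * x)).addHaarScalarFactor μ with hc
  -- evaluate on unit ball
  have hball : MeasurableSet {x : ℚ_[p] | ‖x‖ ≤ 1} :=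
    (isClosed_le (continuous_norm) continuous_const).measurableSet
  have hmap : (μ.map (fun x : ℚ_[p] => η * x)) {x : ℚ_[p] | ‖x‖ ≤ 1} = μ {x : ℚ_[p] | ‖x‖ ≤ 1} := by
    rw [Measure.map_apply hmeas hball]
    congr 1
    ext x
    simp only [Set.mem_preimage, Set.mem_setOf_eq, norm_mul, hη, one_mul]
  have hne : μ {x : ℚ_[p] | ‖x‖ ≤ 1} ≠ 0 := by
    have hopen : Metric.ball (0:ℚ_[p]) 1 ⊆ {x : ℚ_[p] | ‖x‖ ≤ 1} := by
      intro x hx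
      simp only [Metric.mem_ball, dist_zero_right] at hx
      exact le_of_lt hx
    have hpos : 0 < μ (Metric.ball (0:ℚ_[p]) 1) :=
      Metric.isOpen_ball.measure_pos μ (Metric.nonempty_ball.mpr one_pos)
    exact fun h => absurd (measure_mono_null hopen h) (ne_of_gt hpos)
  have hfin : μ {x : ℚ_[p] | ‖x‖ ≤ 1} ≠ ⊤ := unit_ball_compact.measure_lt_top.ne
  have hc1 : (c : ℝ≥0∞) = 1 := by
    have h2 := hmap
    rw [huniq] at h2
    simp only [Measure.smul_apply, smul_eq_mul] at h2
    exact (ENNReal.mul_eq_right hne hfin).mp h2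
  have hc1' : c = 1 := by exact_mod_cast hc1
  constructor
  · exact hmeas
  · rw [huniq, hc1', one_smul]
lemma psi_norm_one (ψ : AddChar ℚ_[p] ℂ)
    (hψ_triv : ∀ x : ℚ_[p], ‖x‖ ≤ (p : ℝ)⁻¹ → ψ x = 1) (x : ℚ_[p]) : ‖ψ x‖ = 1 := by
  have hp1 : (1:ℝ) < (p:ℝ) := by exact_mod_cast (Fact.out : p.Prime).one_lt
  obtain ⟨n, hn⟩ : ∃ n : ℕ, ‖x‖ ≤ (p:ℝ) ^ n := by
    obtain ⟨n, hn⟩ := pow_unbounded_of_one_lt ‖x‖ hp1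
    exact ⟨n, le_of_lt hn⟩
  have key : ψ x ^ (p ^ (n+1)) = 1 := by
    have h1 : ((p:ℚ_[p]) ^ (n+1)) * x = ((p ^ (n+1) : ℕ) : ℚ_[p]) * x := by push_cast; ring
    have h2 : ψ (((p ^ (n+1) : ℕ) : ℚ_[p]) * x) = ψ x ^ (p ^ (n+1)) := by
      rw [← nsmul_eq_mul, AddChar.map_nsmul_eq_pow]
    rw [← h2, ← h1]
    apply hψ_triv
    rw [norm_mul, norm_pow, Padic.norm_p]
    calc (p:ℝ)⁻¹ ^ (n+1) * ‖x‖ ≤ (p:ℝ)⁻¹ ^ (n+1) * (p:ℝ)^n := by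
          apply mul_le_mul_of_nonneg_left hn (by positivity)
      _ = (p:ℝ)⁻¹ := by
          rw [pow_succ]
          field_simp
          rw [one_div, inv_pow, inv_mul_cancel₀ (pow_ne_zero _ (by positivity))]
  have : ‖ψ x‖ ^ (p ^ (n+1)) = 1 := by
    rw [← norm_pow, key, norm_one]
  have hN : p ^ (n+1) ≠ 0 := pow_ne_zero _ (Fact.out : p.Prime).ne_zero
  rcases lt_trichotomy ‖ψ x‖ 1 with h | h | h
  · exact absurd this (by
      have := pow_lt_one₀ (norm_nonneg (ψ x)) h hN
      linarith)
  · exact h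
  · exact absurd this (by
      have := one_lt_pow₀ h hN
      linarith)

lemma psi_cont (ψ : AddChar ℚ_[p] ℂ)
    (hψ_triv : ∀ x : ℚ_[p], ‖x‖ ≤ (p : ℝ)⁻¹ → ψ x = 1) : Continuous ψ := by
  have hp0 : (0:ℝ) < (p:ℝ)⁻¹ := by
    have : (0:ℝ) < (p:ℝ) := by exact_mod_cast (Fact.out : p.Prime).pos
    positivity
  rw [continuous_iff_continuousAt]
  intro x
  have : ∀ y ∈ Metric.ball x ((p:ℝ)⁻¹), ψ y = ψ x := by
    intro y hy
    rw [Metric.mem_ball, dist_eq_norm] at hy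
    have : ψ y = ψ x * ψ (y - x) := by
      rw [← AddChar.map_add_eq_mul]; ring_nf
    rw [this, hψ_triv _ (le_of_lt hy), mul_one]
  apply ContinuousAt.congr (continuousAt_const (y := ψ x))
  filter_upwards [Metric.ball_mem_nhds x hp0] with y hy
  exact (this y hy).symm

lemma ball_vanish (ψ : AddChar ℚ_[p] ℂ)
    (hψ_triv : ∀ x : ℚ_[p], ‖x‖ ≤ (p : ℝ)⁻¹ → ψ x = 1)
    (μ : Measure ℚ_[p]) [μ.IsAddHaarMeasure]
    (θ : ℚ_[p]) (r : ℝ) (y : ℚ_[p]) (hy : ‖y‖ ≤ r) (hne : ψ (y * θ) ≠ 1) :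
    ∫ x in {x : ℚ_[p] | ‖x‖ ≤ r}, ψ (x * θ) ∂μ = 0 := by
  set S : Set ℚ_[p] := {x : ℚ_[p] | ‖x‖ ≤ r} with hS
  have hSmeas : MeasurableSet S := (isClosed_le continuous_norm continuous_const).measurableSet
  have hSinv : ∀ x : ℚ_[p], x + y ∈ S ↔ x ∈ S := by
    intro x
    constructor
    · intro h
      have : ‖x‖ = ‖(x + y) + (-y)‖ := by ring_nf
      rw [hS, Set.mem_setOf_eq, this]
      exact le_trans (Padic.nonarchimedean _ _) (max_le h (by rwa [norm_neg]))
    · intro h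
      exact le_trans (Padic.nonarchimedean _ _) (max_le h hy)
  have h3 : ∀ x : ℚ_[p], S.indicator (fun x => (ψ (x * θ) : ℂ)) (x + y)
      = ψ (y * θ) * S.indicator (fun x => (ψ (x * θ) : ℂ)) x := by
    intro x
    by_cases hx : x ∈ S
    · rw [Set.indicator_of_mem ((hSinv x).mpr hx), Set.indicator_of_mem hx]
      rw [← AddChar.map_add_eq_mul]
      ring_nf
    · rw [Set.indicator_of_notMem (fun h => hx ((hSinv x).mp h)), Set.indicator_of_notMem hx,
        mul_zero]
  have key : ∫ x in S, ψ (x * θ) ∂μ = ψ (y * θ) * ∫ x in S, ψ (x * θ) ∂μ := by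
    calc ∫ x in S, ψ (x * θ) ∂μ
        = ∫ x, S.indicator (fun x => (ψ (x * θ) : ℂ)) x ∂μ := (integral_indicator hSmeas).symm
      _ = ∫ x, S.indicator (fun x => (ψ (x * θ) : ℂ)) (x + y) ∂μ :=
          (integral_add_right_eq_self (μ := μ) (S.indicator (fun x => (ψ (x * θ) : ℂ))) y).symm
      _ = ∫ x, ψ (y * θ) * S.indicator (fun x => (ψ (x * θ) : ℂ)) x ∂μ := by
          congr 1
          funext x
          exact h3 x
      _ = ψ (y * θ) * ∫ x, S.indicator (fun x => (ψ (x * θ) : ℂ)) x ∂μ :=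
          integral_const_mul _ _
      _ = ψ (y * θ) * ∫ x in S, ψ (x * θ) ∂μ := by rw [integral_indicator hSmeas]
  have hfac : (1 - ψ (y * θ)) * ∫ x in S, ψ (x * θ) ∂μ = 0 := by linear_combination key
  rcases mul_eq_zero.mp hfac with h | h
  · exact absurd (by linear_combination -h : ψ (y * θ) = 1) hne
  · exact h

lemma ball_vanish' (ψ : AddChar ℚ_[p] ℂ)
    (hψ_triv : ∀ x : ℚ_[p], ‖x‖ ≤ (p : ℝ)⁻¹ → ψ x = 1)
    (hψ_nontriv : ∃ x : ℚ_[p], ‖x‖ ≤ 1 ∧ ψ x ≠ 1)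
    (μ : Measure ℚ_[p]) [μ.IsAddHaarMeasure]
    (θ : ℚ_[p]) (r : ℝ) (h1 : 1 ≤ ‖θ‖ * r) :
    ∫ x in {x : ℚ_[p] | ‖x‖ ≤ r}, ψ (x * θ) ∂μ = 0 := by
  obtain ⟨x₀, hx₀, hx₀ne⟩ := hψ_nontriv
  have hθ0 : θ ≠ 0 := by
    intro h
    rw [h, norm_zero, zero_mul] at h1
    linarith
  have hθpos : 0 < ‖θ‖ := norm_pos_iff.mpr hθ0
  refine ball_vanish ψ hψ_triv μ θ r (x₀ / θ) ?_ ?_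
  · rw [norm_div]
    rw [div_le_iff₀ hθpos]
    calc ‖x₀‖ ≤ 1 := hx₀
      _ ≤ ‖θ‖ * r := h1
      _ = r * ‖θ‖ := mul_comm _ _
  · have : x₀ / θ * θ = x₀ := by field_simp
    rw [this]
    exact hx₀ne

lemma region_vanish3 (hp : Odd p) (ψ : AddChar ℚ_[p] ℂ)
    (hψ_triv : ∀ x : ℚ_[p], ‖x‖ ≤ (p : ℝ)⁻¹ → ψ x = 1)
    (hψ_nontriv : ∃ x : ℚ_[p], ‖x‖ ≤ 1 ∧ ψ x ≠ 1)
    (μ : Measure ℚ_[p]) [μ.IsAddHaarMeasure]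
    (B C : ℚ_[p])
    (E : Set (ℚ_[p] × ℚ_[p] × ℚ_[p])) (hEmeas : MeasurableSet E)
    (hEfin : (μ.prod (μ.prod μ)) E ≠ ⊤)
    (hEinv : ∀ η u : ℚ_[p], ‖η‖ = 1 → ‖u‖ = 1 → η ^ 2 = u →
       (fun x : ℚ_[p] × ℚ_[p] × ℚ_[p] => (η * x.1, x.2.1, u * x.2.2)) ⁻¹' E = E)
    (hEnorm : ∀ x ∈ E, 1 ≤ ‖x.2.2 * B * (p : ℚ_[p])‖) :
    ∫ x in E, ψ (x.2.1 * C + x.2.2 * B) ∂(μ.prod (μ.prod μ)) = 0 := by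
  set ν := μ.prod (μ.prod μ) with hν
  set f : ℚ_[p] × ℚ_[p] × ℚ_[p] → ℂ := fun x => ψ (x.2.1 * C + x.2.2 * B) with hfdef
  have hfcont : Continuous f := by
    apply (psi_cont ψ hψ_triv).comp
    exact ((continuous_fst.comp continuous_snd).mul continuous_const).add
      ((continuous_snd.comp continuous_snd).mul continuous_const)
  set I := ∫ x in E, f x ∂ν with hI
  -- step 1
  have step1 : ∀ w : ℚ_[p], ‖w‖ ≤ 1 →
      I = ∫ x in E, f x * ψ (x.2.2 * B * ((p:ℚ_[p]) * w)) ∂ν := by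
    intro w hw
    obtain ⟨η, hη2, hη⟩ := padic_sqrt hp w hw
    set u : ℚ_[p] := 1 + p * w with hu_def
    have hu : ‖u‖ = 1 := by
      have : ‖η ^ 2‖ = ‖u‖ := by rw [hη2]
      rw [norm_pow, hη] at this
      simpa using this.symm
    have hη0 : η ≠ 0 := by intro h; rw [h, norm_zero] at hη; norm_num at hη
    have hu0 : u ≠ 0 := by intro h; rw [h, norm_zero] at hu; norm_num at hu
    set Φ : ℚ_[p] × ℚ_[p] × ℚ_[p] → ℚ_[p] × ℚ_[p] × ℚ_[p] :=
      fun x => (η * x.1, x.2.1, u * x.2.2) with hΦ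
    have hmp : MeasurePreserving Φ ν ν := by
      have h := (mp_unit μ η hη).prod
        ((MeasurePreserving.id μ).prod (mp_unit μ u hu))
      exact h
    have hemb : MeasurableEmbedding Φ := by
      have H := ((Homeomorph.mulLeft₀ η hη0).prodCongr
        ((Homeomorph.refl ℚ_[p]).prodCongr (Homeomorph.mulLeft₀ u hu0))).measurableEmbedding
      exact H
    have hpre : Φ ⁻¹' E = E := hEinv η u hη hu hη2
    have hkey := hmp.setIntegral_preimage_emb hemb f E
    rw [hpre] at hkey
    rw [hI, ← hkey]
    apply setIntegral_congr_fun hEmeas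
    intro x hx
    show f (Φ x) = f x * ψ (x.2.2 * B * ((p:ℚ_[p]) * w))
    rw [hfdef]
    simp only [hΦ]
    rw [← AddChar.map_add_eq_mul]
    congr 1
    rw [hu_def]
    ring
  -- step 2: average over w
  set A : Set ℚ_[p] := {w : ℚ_[p] | ‖w‖ ≤ 1} with hA
  have hAmeas : MeasurableSet A := (isClosed_le continuous_norm continuous_const).measurableSet
  haveI : IsFiniteMeasure (μ.restrict A) := ⟨by
    rw [Measure.restrict_apply_univ]
    exact unit_ball_compact.measure_lt_top⟩
  haveI : IsFiniteMeasure (ν.restrict E) := ⟨by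
    rw [Measure.restrict_apply_univ]
    exact lt_top_iff_ne_top.2 hEfin⟩
  have hbig : (μ A).toReal • I = 0 := by
    have e1 : (μ A).toReal • I = ∫ w in A, I ∂μ := (setIntegral_const I).symm
    have e2 : ∫ w in A, I ∂μ
        = ∫ w in A, (∫ x in E, f x * ψ (x.2.2 * B * ((p:ℚ_[p]) * w)) ∂ν) ∂μ := by
      apply setIntegral_congr_fun hAmeas
      intro w hw
      exact step1 w hw
    have hint : Integrable (Function.uncurry
        (fun (w : ℚ_[p]) (x : ℚ_[p] × ℚ_[p] × ℚ_[p]) =>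
          f x * ψ (x.2.2 * B * ((p:ℚ_[p]) * w))))
        ((μ.restrict A).prod (ν.restrict E)) := by
      apply Integrable.mono' (integrable_const (1:ℝ))
      · apply Continuous.aestronglyMeasurable
        exact (hfcont.comp continuous_snd).mul ((psi_cont ψ hψ_triv).comp
          (((continuous_snd.comp (continuous_snd.comp continuous_snd)).mul
            continuous_const).mul (by fun_prop)))
      · filter_upwards with z
        rw [Function.uncurry]
        rw [norm_mul, hfdef]
        simp only []
        rw [psi_norm_one ψ hψ_triv, psi_norm_one ψ hψ_triv, mul_one]
    have e3 : ∫ w in A, (∫ x in E, f x * ψ (x.2.2 * B * ((p:ℚ_[p]) * w)) ∂ν) ∂μ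
        = ∫ x in E, (∫ w in A, f x * ψ (x.2.2 * B * ((p:ℚ_[p]) * w)) ∂μ) ∂ν :=
      integral_integral_swap hint
    have e4 : ∫ x in E, (∫ w in A, f x * ψ (x.2.2 * B * ((p:ℚ_[p]) * w)) ∂μ) ∂ν = 0 := by
      have ept : ∀ x ∈ E, (∫ w in A, f x * ψ (x.2.2 * B * ((p:ℚ_[p]) * w)) ∂μ) = (0:ℂ) := by
        intro x hx
        have hpt : ∫ w in A, f x * ψ (x.2.2 * B * ((p:ℚ_[p]) * w)) ∂μ
            = f x * ∫ w in A, ψ (w * (x.2.2 * B * (p:ℚ_[p]))) ∂μ := by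
          rw [← integral_const_mul]
          apply setIntegral_congr_fun hAmeas
          intro w hw
          congr 2
          ring
        rw [hpt, ball_vanish' ψ hψ_triv hψ_nontriv μ _ 1 (by
          rw [mul_one]; exact hEnorm x hx), mul_zero]
      rw [setIntegral_congr_fun hEmeas ept]
      simp
    rw [e1, e2, e3, e4]
  -- conclude
  have hAne : (μ A).toReal ≠ 0 := by
    have hopen : Metric.ball (0:ℚ_[p]) 1 ⊆ A := by
      intro x hx
      simp only [Metric.mem_ball, dist_zero_right] at hx
      exact le_of_lt hx
    have hpos : 0 < μ (Metric.ball (0:ℚ_[p]) 1) :=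
      Metric.isOpen_ball.measure_pos μ (Metric.nonempty_ball.mpr one_pos)
    have hne : μ A ≠ 0 := fun h => absurd (measure_mono_null hopen h) (ne_of_gt hpos)
    exact ENNReal.toReal_ne_zero.mpr ⟨hne, unit_ball_compact.measure_lt_top.ne⟩
  have := smul_eq_zero.mp hbig
  rcases this with h | h
  · exact absurd h hAne
  · exact h


lemma region_vanish2 (hp : Odd p) (ψ : AddChar ℚ_[p] ℂ)
    (hψ_triv : ∀ x : ℚ_[p], ‖x‖ ≤ (p : ℝ)⁻¹ → ψ x = 1)
    (hψ_nontriv : ∃ x : ℚ_[p], ‖x‖ ≤ 1 ∧ ψ x ≠ 1)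
    (μ : Measure ℚ_[p]) [μ.IsAddHaarMeasure]
    (B C : ℚ_[p])
    (E : Set (ℚ_[p] × ℚ_[p] × ℚ_[p])) (hEmeas : MeasurableSet E)
    (hEfin : (μ.prod (μ.prod μ)) E ≠ ⊤)
    (hEinv : ∀ η u : ℚ_[p], ‖η‖ = 1 → ‖u‖ = 1 → η ^ 2 = u →
       (fun x : ℚ_[p] × ℚ_[p] × ℚ_[p] => (η * x.1, u * x.2.1, x.2.2)) ⁻¹' E = E)
    (hEnorm : ∀ x ∈ E, 1 ≤ ‖x.2.1 * C * (p : ℚ_[p])‖) :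
    ∫ x in E, ψ (x.2.1 * C + x.2.2 * B) ∂(μ.prod (μ.prod μ)) = 0 := by
  set ν := μ.prod (μ.prod μ) with hν
  set f : ℚ_[p] × ℚ_[p] × ℚ_[p] → ℂ := fun x => ψ (x.2.1 * C + x.2.2 * B) with hfdef
  have hfcont : Continuous f := by
    apply (psi_cont ψ hψ_triv).comp
    exact ((continuous_fst.comp continuous_snd).mul continuous_const).add
      ((continuous_snd.comp continuous_snd).mul continuous_const)
  set I := ∫ x in E, f x ∂ν with hI
  -- step 1
  have step1 : ∀ w : ℚ_[p], ‖w‖ ≤ 1 →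
      I = ∫ x in E, f x * ψ (x.2.1 * C * ((p:ℚ_[p]) * w)) ∂ν := by
    intro w hw
    obtain ⟨η, hη2, hη⟩ := padic_sqrt hp w hw
    set u : ℚ_[p] := 1 + p * w with hu_def
    have hu : ‖u‖ = 1 := by
      have : ‖η ^ 2‖ = ‖u‖ := by rw [hη2]
      rw [norm_pow, hη] at this
      simpa using this.symm
    have hη0 : η ≠ 0 := by intro h; rw [h, norm_zero] at hη; norm_num at hη
    have hu0 : u ≠ 0 := by intro h; rw [h, norm_zero] at hu; norm_num at hu
    set Φ : ℚ_[p] × ℚ_[p] × ℚ_[p] → ℚ_[p] × ℚ_[p] × ℚ_[p] :=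
      fun x => (η * x.1, u * x.2.1, x.2.2) with hΦ
    have hmp : MeasurePreserving Φ ν ν := by
      have h := (mp_unit μ η hη).prod
        ((mp_unit μ u hu).prod (MeasurePreserving.id μ))
      exact h
    have hemb : MeasurableEmbedding Φ := by
      have H := ((Homeomorph.mulLeft₀ η hη0).prodCongr
        ((Homeomorph.mulLeft₀ u hu0).prodCongr (Homeomorph.refl ℚ_[p]))).measurableEmbedding
      exact H
    have hpre : Φ ⁻¹' E = E := hEinv η u hη hu hη2
    have hkey := hmp.setIntegral_preimage_emb hemb f E
    rw [hpre] at hkey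
    rw [hI, ← hkey]
    apply setIntegral_congr_fun hEmeas
    intro x hx
    show f (Φ x) = f x * ψ (x.2.1 * C * ((p:ℚ_[p]) * w))
    rw [hfdef]
    simp only [hΦ]
    rw [← AddChar.map_add_eq_mul]
    congr 1
    rw [hu_def]
    ring
  -- step 2: average over w
  set A : Set ℚ_[p] := {w : ℚ_[p] | ‖w‖ ≤ 1} with hA
  have hAmeas : MeasurableSet A := (isClosed_le continuous_norm continuous_const).measurableSet
  haveI : IsFiniteMeasure (μ.restrict A) := ⟨by
    rw [Measure.restrict_apply_univ]
    exact unit_ball_compact.measure_lt_top⟩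
  haveI : IsFiniteMeasure (ν.restrict E) := ⟨by
    rw [Measure.restrict_apply_univ]
    exact lt_top_iff_ne_top.2 hEfin⟩
  have hbig : (μ A).toReal • I = 0 := by
    have e1 : (μ A).toReal • I = ∫ w in A, I ∂μ := (setIntegral_const I).symm
    have e2 : ∫ w in A, I ∂μ
        = ∫ w in A, (∫ x in E, f x * ψ (x.2.1 * C * ((p:ℚ_[p]) * w)) ∂ν) ∂μ := by
      apply setIntegral_congr_fun hAmeas
      intro w hw
      exact step1 w hw
    have hint : Integrable (Function.uncurry
        (fun (w : ℚ_[p]) (x : ℚ_[p] × ℚ_[p] × ℚ_[p]) =>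
          f x * ψ (x.2.1 * C * ((p:ℚ_[p]) * w))))
        ((μ.restrict A).prod (ν.restrict E)) := by
      apply Integrable.mono' (integrable_const (1:ℝ))
      · apply Continuous.aestronglyMeasurable
        exact (hfcont.comp continuous_snd).mul ((psi_cont ψ hψ_triv).comp
          (((continuous_fst.comp (continuous_snd.comp continuous_snd)).mul
            continuous_const).mul (by fun_prop)))
      · filter_upwards with z
        rw [Function.uncurry]
        rw [norm_mul, hfdef]
        simp only []
        rw [psi_norm_one ψ hψ_triv, psi_norm_one ψ hψ_triv, mul_one]
    have e3 : ∫ w in A, (∫ x in E, f x * ψ (x.2.1 * C * ((p:ℚ_[p]) * w)) ∂ν) ∂μ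
        = ∫ x in E, (∫ w in A, f x * ψ (x.2.1 * C * ((p:ℚ_[p]) * w)) ∂μ) ∂ν :=
      integral_integral_swap hint
    have e4 : ∫ x in E, (∫ w in A, f x * ψ (x.2.1 * C * ((p:ℚ_[p]) * w)) ∂μ) ∂ν = 0 := by
      have ept : ∀ x ∈ E, (∫ w in A, f x * ψ (x.2.1 * C * ((p:ℚ_[p]) * w)) ∂μ) = (0:ℂ) := by
        intro x hx
        have hpt : ∫ w in A, f x * ψ (x.2.1 * C * ((p:ℚ_[p]) * w)) ∂μ
            = f x * ∫ w in A, ψ (w * (x.2.1 * C * (p:ℚ_[p]))) ∂μ := by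
          rw [← integral_const_mul]
          apply setIntegral_congr_fun hAmeas
          intro w hw
          congr 2
          ring
        rw [hpt, ball_vanish' ψ hψ_triv hψ_nontriv μ _ 1 (by
          rw [mul_one]; exact hEnorm x hx), mul_zero]
      rw [setIntegral_congr_fun hEmeas ept]
      simp
    rw [e1, e2, e3, e4]
  -- conclude
  have hAne : (μ A).toReal ≠ 0 := by
    have hopen : Metric.ball (0:ℚ_[p]) 1 ⊆ A := by
      intro x hx
      simp only [Metric.mem_ball, dist_zero_right] at hx
      exact le_of_lt hx
    have hpos : 0 < μ (Metric.ball (0:ℚ_[p]) 1) :=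
      Metric.isOpen_ball.measure_pos μ (Metric.nonempty_ball.mpr one_pos)
    have hne : μ A ≠ 0 := fun h => absurd (measure_mono_null hopen h) (ne_of_gt hpos)
    exact ENNReal.toReal_ne_zero.mpr ⟨hne, unit_ball_compact.measure_lt_top.ne⟩
  have := smul_eq_zero.mp hbig
  rcases this with h | h
  · exact absurd h hAne
  · exact h

set_option maxHeartbeats 2000000 in
/-- For `p` an odd prime, `ψ` an additive character of `ℚ_p` with conductor `pℤ_p`
(trivial on `pℤ_p`, nontrivial on `ℤ_p`), `μ` an additive Haar measure on `ℚ_p`, and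
`B, C ∈ ℚ_p^×` with `v(B) = v(C) ≤ 0`, there exists `L` such that for all `ℓ ≥ L`
the integral of `ψ(b·C + c·B)` over
`T_ℓ = {(a,b,c) : a,b,c ∈ p^{-ℓ}ℤ_p, a² + b·c ∈ ℤ_p}` vanishes. -/
theorem integral_vanishes_equal_valuation
    (p : ℕ) [Fact p.Prime] (hp : Odd p)
    [MeasurableSpace ℚ_[p]] [BorelSpace ℚ_[p]]
    (ψ : AddChar ℚ_[p] ℂ)
    (hψ_triv : ∀ x : ℚ_[p], ‖x‖ ≤ (p : ℝ)⁻¹ → ψ x = 1)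
    (hψ_nontriv : ∃ x : ℚ_[p], ‖x‖ ≤ 1 ∧ ψ x ≠ 1)
    (μ : Measure ℚ_[p]) [μ.IsAddHaarMeasure]
    (B C : ℚ_[p]) (hB : B ≠ 0) (hC : C ≠ 0)
    (hBC : B.valuation = C.valuation) (hC0 : C.valuation ≤ 0) :
    ∃ L : ℕ, ∀ ℓ : ℕ, L ≤ ℓ →
      (∫ x in {x : ℚ_[p] × ℚ_[p] × ℚ_[p] |
          ‖x.1‖ ≤ (p : ℝ) ^ ℓ ∧ ‖x.2.1‖ ≤ (p : ℝ) ^ ℓ ∧ ‖x.2.2‖ ≤ (p : ℝ) ^ ℓ ∧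
            ‖x.1 ^ 2 + x.2.1 * x.2.2‖ ≤ 1},
        ψ (x.2.1 * C + x.2.2 * B) ∂(μ.prod (μ.prod μ))) = 0 := by
  refine ⟨0, fun ℓ _ => ?_⟩
  have hp1 : (1:ℝ) < (p:ℝ) := by exact_mod_cast (Fact.out : p.Prime).one_lt
  have hp0 : (0:ℝ) < (p:ℝ) := lt_trans one_pos hp1
  have hpne : (p:ℝ) ≠ 0 := ne_of_gt hp0
  set ν := μ.prod (μ.prod μ) with hν
  set rℓ : ℝ := (p:ℝ) ^ ℓ with hrℓ
  set rC : ℝ := (p:ℝ) ^ (C.valuation) with hrC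
  have hrCpos : 0 < rC := zpow_pos hp0 _
  have hrC1 : rC ≤ 1 := by
    rw [hrC]
    calc (p:ℝ) ^ (C.valuation) ≤ (p:ℝ) ^ (0:ℤ) :=
          zpow_le_zpow_right₀ (le_of_lt hp1) hC0
      _ = 1 := zpow_zero _
  have hrℓ1 : (1:ℝ) ≤ rℓ := one_le_pow₀ (le_of_lt hp1)
  have hnormC : ‖C‖ = (p:ℝ) ^ (-C.valuation) := Padic.norm_eq_zpow_neg_valuation hC
  have hnormB : ‖B‖ = (p:ℝ) ^ (-C.valuation) := by
    rw [Padic.norm_eq_zpow_neg_valuation hB, hBC]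
  have hCrC : ‖C‖ * rC = 1 := by
    rw [hnormC, hrC, ← zpow_add₀ hpne]
    simp
  have hBrC : ‖B‖ * rC = 1 := by
    rw [hnormB, hrC, ← zpow_add₀ hpne]
    simp
  set S : Set (ℚ_[p] × ℚ_[p] × ℚ_[p]) := {x : ℚ_[p] × ℚ_[p] × ℚ_[p] |
      ‖x.1‖ ≤ (p : ℝ) ^ ℓ ∧ ‖x.2.1‖ ≤ (p : ℝ) ^ ℓ ∧ ‖x.2.2‖ ≤ (p : ℝ) ^ ℓ ∧
        ‖x.1 ^ 2 + x.2.1 * x.2.2‖ ≤ 1} with hSdef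
  -- continuity facts
  have hc1 : Continuous fun x : ℚ_[p] × ℚ_[p] × ℚ_[p] => ‖x.1‖ := continuous_fst.norm
  have hc2 : Continuous fun x : ℚ_[p] × ℚ_[p] × ℚ_[p] => ‖x.2.1‖ :=
    (continuous_fst.comp continuous_snd).norm
  have hc3 : Continuous fun x : ℚ_[p] × ℚ_[p] × ℚ_[p] => ‖x.2.2‖ :=
    (continuous_snd.comp continuous_snd).norm
  have hc4 : Continuous fun x : ℚ_[p] × ℚ_[p] × ℚ_[p] => ‖x.1 ^ 2 + x.2.1 * x.2.2‖ :=
    ((continuous_fst.pow 2).add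
      ((continuous_fst.comp continuous_snd).mul (continuous_snd.comp continuous_snd))).norm
  have hSmeas : MeasurableSet S := by
    rw [hSdef]
    apply MeasurableSet.inter
    · exact (isClosed_le hc1 continuous_const).measurableSet
    apply MeasurableSet.inter
    · exact (isClosed_le hc2 continuous_const).measurableSet
    apply MeasurableSet.inter
    · exact (isClosed_le hc3 continuous_const).measurableSet
    · exact (isClosed_le hc4 continuous_const).measurableSet
  -- finiteness
  have hball_fin : ∀ r : ℝ, μ {x : ℚ_[p] | ‖x‖ ≤ r} ≠ ⊤ := by
    intro r
    have : {x : ℚ_[p] | ‖x‖ ≤ r} = Metric.closedBall 0 r := by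
      ext x; simp [Metric.mem_closedBall, dist_eq_norm]
    rw [this]
    exact (isCompact_closedBall 0 r).measure_lt_top.ne
  have hSsub : S ⊆ {x : ℚ_[p] | ‖x‖ ≤ rℓ} ×ˢ
      ({x : ℚ_[p] | ‖x‖ ≤ rℓ} ×ˢ {x : ℚ_[p] | ‖x‖ ≤ rℓ}) := by
    intro x hx
    obtain ⟨h1, h2, h3, -⟩ := hx
    exact ⟨h1, h2, h3⟩
  have hSfin : ν S ≠ ⊤ := by
    apply ne_top_of_le_ne_top _ (measure_mono hSsub)
    rw [hν, Measure.prod_prod, Measure.prod_prod]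
    exact ENNReal.mul_ne_top (hball_fin rℓ) (ENNReal.mul_ne_top (hball_fin rℓ) (hball_fin rℓ))
  -- integrand and integrability
  set f : ℚ_[p] × ℚ_[p] × ℚ_[p] → ℂ := fun x => ψ (x.2.1 * C + x.2.2 * B) with hfdef
  have hfcont : Continuous f := by
    apply (psi_cont ψ hψ_triv).comp
    exact ((continuous_fst.comp continuous_snd).mul continuous_const).add
      ((continuous_snd.comp continuous_snd).mul continuous_const)
  have hint : ∀ E : Set (ℚ_[p] × ℚ_[p] × ℚ_[p]), E ⊆ S → IntegrableOn f E ν := by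
    intro E hE
    apply IntegrableOn.mono_set _ hE
    haveI : IsFiniteMeasure (ν.restrict S) := ⟨by
      rw [Measure.restrict_apply_univ]
      exact lt_top_iff_ne_top.2 hSfin⟩
    apply Integrable.mono' (integrable_const (1:ℝ)) hfcont.aestronglyMeasurable
    filter_upwards with x
    rw [hfdef]
    exact le_of_eq (psi_norm_one ψ hψ_triv _)
  -- the three regions
  set Y : Set (ℚ_[p] × ℚ_[p] × ℚ_[p]) := S ∩ {x | ¬ ‖x.2.2‖ ≤ rC} with hYdef
  set Z : Set (ℚ_[p] × ℚ_[p] × ℚ_[p]) := S ∩ {x | ‖x.2.2‖ ≤ rC ∧ ¬ ‖x.2.1‖ ≤ rC} with hZdef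
  set R : Set (ℚ_[p] × ℚ_[p] × ℚ_[p]) := S ∩ {x | ‖x.2.2‖ ≤ rC ∧ ‖x.2.1‖ ≤ rC} with hRdef
  have hYmeas : MeasurableSet Y :=
    hSmeas.inter ((isClosed_le hc3 continuous_const).measurableSet.compl)
  have hZmeas : MeasurableSet Z :=
    hSmeas.inter (((isClosed_le hc3 continuous_const).measurableSet).inter
      ((isClosed_le hc2 continuous_const).measurableSet.compl))
  have hRmeas : MeasurableSet R :=
    hSmeas.inter (((isClosed_le hc3 continuous_const).measurableSet).inter
      ((isClosed_le hc2 continuous_const).measurableSet))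
  have hsplit : S = Y ∪ (Z ∪ R) := by
    rw [hYdef, hZdef, hRdef]
    ext x
    simp only [Set.mem_union, Set.mem_inter_iff, Set.mem_setOf_eq]
    by_cases h3 : ‖x.2.2‖ ≤ rC <;> by_cases h2 : ‖x.2.1‖ ≤ rC <;> tauto
  have hdisj1 : Disjoint Y (Z ∪ R) := by
    rw [Set.disjoint_left]
    rintro x ⟨-, hx⟩ (⟨-, h, -⟩ | ⟨-, h, -⟩) <;> exact hx h
  have hdisj2 : Disjoint Z R := by
    rw [Set.disjoint_left]
    rintro x ⟨-, -, hx⟩ ⟨-, -, h⟩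
    exact hx h
  -- Y vanishes
  have hY0 : ∫ x in Y, f x ∂ν = 0 := by
    apply region_vanish3 hp ψ hψ_triv hψ_nontriv μ B C Y hYmeas
    · exact ne_top_of_le_ne_top hSfin (measure_mono Set.inter_subset_left)
    · intro η u hη hu hη2
      rw [hYdef, hSdef]
      ext x
      simp only [Set.mem_preimage, Set.mem_inter_iff, Set.mem_setOf_eq]
      have e1 : ‖η * x.1‖ = ‖x.1‖ := by rw [norm_mul, hη, one_mul]
      have e3 : ‖u * x.2.2‖ = ‖x.2.2‖ := by rw [norm_mul, hu, one_mul]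
      have e4 : (η * x.1) ^ 2 + x.2.1 * (u * x.2.2) = u * (x.1 ^ 2 + x.2.1 * x.2.2) := by
        rw [← hη2]; ring
      rw [e1, e3, e4, norm_mul, hu, one_mul]
    · intro x hx
      obtain ⟨-, hc⟩ := hx
      have hge : (p:ℝ) ^ (C.valuation + 1) ≤ ‖x.2.2‖ := by
        by_contra hlt
        push_neg at hlt
        exact hc ((Padic.norm_le_pow_iff_norm_lt_pow_add_one x.2.2 C.valuation).mpr hlt)
      have heq : ‖x.2.2 * B * (p:ℚ_[p])‖ = ‖x.2.2‖ * ((p:ℝ) ^ (-C.valuation) * (p:ℝ)⁻¹) := by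
        rw [norm_mul, norm_mul, hnormB, Padic.norm_p, mul_assoc]
      have hconst : (p:ℝ) ^ (C.valuation + 1) * ((p:ℝ) ^ (-C.valuation) * (p:ℝ)⁻¹) = 1 := by
        rw [← zpow_neg_one, ← zpow_add₀ hpne (-C.valuation) (-1), ← zpow_add₀ hpne]
        have : C.valuation + 1 + (-C.valuation + -1) = 0 := by ring
        rw [this, zpow_zero]
      rw [heq, ← hconst]
      apply mul_le_mul_of_nonneg_right hge
      positivity
  -- Z vanishes
  have hZ0 : ∫ x in Z, f x ∂ν = 0 := by
    apply region_vanish2 hp ψ hψ_triv hψ_nontriv μ B C Z hZmeas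
    · exact ne_top_of_le_ne_top hSfin (measure_mono Set.inter_subset_left)
    · intro η u hη hu hη2
      rw [hZdef, hSdef]
      ext x
      simp only [Set.mem_preimage, Set.mem_inter_iff, Set.mem_setOf_eq]
      have e1 : ‖η * x.1‖ = ‖x.1‖ := by rw [norm_mul, hη, one_mul]
      have e2 : ‖u * x.2.1‖ = ‖x.2.1‖ := by rw [norm_mul, hu, one_mul]
      have e4 : (η * x.1) ^ 2 + (u * x.2.1) * x.2.2 = u * (x.1 ^ 2 + x.2.1 * x.2.2) := by
        rw [← hη2]; ring
      rw [e1, e2, e4, norm_mul, hu, one_mul]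
    · intro x hx
      obtain ⟨-, -, hb⟩ := hx
      have hge : (p:ℝ) ^ (C.valuation + 1) ≤ ‖x.2.1‖ := by
        by_contra hlt
        push_neg at hlt
        exact hb ((Padic.norm_le_pow_iff_norm_lt_pow_add_one x.2.1 C.valuation).mpr hlt)
      have heq : ‖x.2.1 * C * (p:ℚ_[p])‖ = ‖x.2.1‖ * ((p:ℝ) ^ (-C.valuation) * (p:ℝ)⁻¹) := by
        rw [norm_mul, norm_mul, hnormC, Padic.norm_p, mul_assoc]
      have hconst : (p:ℝ) ^ (C.valuation + 1) * ((p:ℝ) ^ (-C.valuation) * (p:ℝ)⁻¹) = 1 := by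
        rw [← zpow_neg_one, ← zpow_add₀ hpne (-C.valuation) (-1), ← zpow_add₀ hpne]
        have : C.valuation + 1 + (-C.valuation + -1) = 0 := by ring
        rw [this, zpow_zero]
      rw [heq, ← hconst]
      apply mul_le_mul_of_nonneg_right hge
      positivity
  -- R is a product box
  have hRprod : R = {x : ℚ_[p] | ‖x‖ ≤ 1} ×ˢ
      ({x : ℚ_[p] | ‖x‖ ≤ rC} ×ˢ {x : ℚ_[p] | ‖x‖ ≤ rC}) := by
    rw [hRdef, hSdef]
    ext x
    simp only [Set.mem_inter_iff, Set.mem_setOf_eq, Set.mem_prod]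
    constructor
    · rintro ⟨⟨h1, h2, h3, h4⟩, hc, hb⟩
      refine ⟨?_, hb, hc⟩
      have hbc : ‖x.2.1 * x.2.2‖ ≤ 1 := by
        rw [norm_mul]
        calc ‖x.2.1‖ * ‖x.2.2‖ ≤ rC * rC :=
              mul_le_mul hb hc (norm_nonneg _) (le_of_lt hrCpos)
          _ ≤ 1 := by nlinarith
      have hsq : ‖x.1 ^ 2‖ ≤ 1 := by
        have hrw : x.1 ^ 2 = (x.1 ^ 2 + x.2.1 * x.2.2) + (-(x.2.1 * x.2.2)) := by ring
        rw [hrw]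
        refine le_trans (Padic.nonarchimedean _ _) (max_le h4 ?_)
        rwa [norm_neg]
      rw [norm_pow] at hsq
      nlinarith [norm_nonneg x.1]
    · rintro ⟨ha, hb, hc⟩
      have h1 : ‖x.1‖ ≤ (p:ℝ) ^ ℓ := le_trans ha hrℓ1
      have hb2 : ‖x.2.1‖ ≤ (p:ℝ) ^ ℓ := le_trans hb (le_trans hrC1 hrℓ1)
      have hc2 : ‖x.2.2‖ ≤ (p:ℝ) ^ ℓ := le_trans hc (le_trans hrC1 hrℓ1)
      refine ⟨⟨h1, hb2, hc2, ?_⟩, hc, hb⟩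
      refine le_trans (Padic.nonarchimedean _ _) (max_le ?_ ?_)
      · rw [norm_pow]
        nlinarith [norm_nonneg x.1]
      · rw [norm_mul]
        calc ‖x.2.1‖ * ‖x.2.2‖ ≤ rC * rC :=
              mul_le_mul hb hc (norm_nonneg _) (le_of_lt hrCpos)
          _ ≤ 1 := by nlinarith
  -- R vanishes
  have hR0 : ∫ x in R, f x ∂ν = 0 := by
    have hfs : ∀ x : ℚ_[p] × ℚ_[p] × ℚ_[p],
        f x = (fun _ : ℚ_[p] => (1:ℂ)) x.1 *
          ((fun y : ℚ_[p] × ℚ_[p] => (ψ (y.1 * C) : ℂ) * ψ (y.2 * B)) x.2) := by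
      intro x
      rw [hfdef]
      simp only []
      rw [AddChar.map_add_eq_mul, one_mul]
    have hCzero : ∫ b in {x : ℚ_[p] | ‖x‖ ≤ rC}, (ψ (b * C) : ℂ) ∂μ = 0 :=
      ball_vanish' ψ hψ_triv hψ_nontriv μ C rC (le_of_eq hCrC.symm)
    have e2 : (∫ y, (fun y : ℚ_[p] × ℚ_[p] => (ψ (y.1 * C) : ℂ) * ψ (y.2 * B)) y
          ∂((μ.restrict {x : ℚ_[p] | ‖x‖ ≤ rC}).prod (μ.restrict {x : ℚ_[p] | ‖x‖ ≤ rC})))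
        = (∫ b in {x : ℚ_[p] | ‖x‖ ≤ rC}, (ψ (b * C) : ℂ) ∂μ) *
          (∫ c in {x : ℚ_[p] | ‖x‖ ≤ rC}, (ψ (c * B) : ℂ) ∂μ) :=
      integral_prod_mul (fun b : ℚ_[p] => (ψ (b * C) : ℂ)) (fun c : ℚ_[p] => (ψ (c * B) : ℂ))
    have step : ∫ x in R, f x ∂ν
        = (∫ _ in {x : ℚ_[p] | ‖x‖ ≤ 1}, (1:ℂ) ∂μ) *
          ((∫ b in {x : ℚ_[p] | ‖x‖ ≤ rC}, (ψ (b * C) : ℂ) ∂μ) *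
           (∫ c in {x : ℚ_[p] | ‖x‖ ≤ rC}, (ψ (c * B) : ℂ) ∂μ)) := by
      rw [hRprod, hν, ← Measure.prod_restrict, ← Measure.prod_restrict]
      refine (integral_congr_ae (Filter.Eventually.of_forall hfs)).trans ?_
      refine (integral_prod_mul (fun _ : ℚ_[p] => (1:ℂ))
        (fun y : ℚ_[p] × ℚ_[p] => (ψ (y.1 * C) : ℂ) * ψ (y.2 * B))).trans ?_
      exact congrArg _ e2
    rw [step, hCzero, zero_mul, mul_zero]
  -- combine
  have hcomb : ∫ x in S, f x ∂ν = 0 := by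
    rw [hsplit,
      setIntegral_union hdisj1 (hZmeas.union hRmeas)
        (hint Y Set.inter_subset_left)
        (hint (Z ∪ R) (Set.union_subset Set.inter_subset_left Set.inter_subset_left)),
      setIntegral_union hdisj2 hRmeas
        (hint Z Set.inter_subset_left) (hint R Set.inter_subset_left),
      hY0, hZ0, hR0]
    ring
  exact hcomb
end
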